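/- arXiv:1202.3585 — 9 statements merged into one kernel-verified Lean document; each statement's English description precedes it below -/
import Mathlib

section
/- If m is a left-invariant mean on an amenable group M and f is a homogeneous quasicharacter on M, then f(g) = m(h ↦ f(gh) − f(h)) for all g, and f is a group homomorphism M → ℝ. -/
/-- If `m` is a left-invariant mean on an amenable group `M` and `f` a homogeneous
quasicharacter on `M`, then `f g = m (h ↦ f (g h) - f h)` for all `g`, and `f` is a group
homomorphism `M → ℝ`. -/
theorem stmt_4 {M : Type*} [Group M] (m : (M → ℝ) → ℝ)
    (hadd : ∀ F G : M → ℝ, (∃ B, ∀ x, |F x| ≤ B) → (∃ B, ∀ x, |G x| ≤ B) →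
      m (F + G) = m F + m G)
    (hsmul : ∀ (c : ℝ) (F : M → ℝ), (∃ B, ∀ x, |F x| ≤ B) → m (c • F) = c * m F)
    (hpos : ∀ F : M → ℝ, (∃ B, ∀ x, |F x| ≤ B) → (∀ x, 0 ≤ F x) → 0 ≤ m F)
    (hone : m (fun _ => (1 : ℝ)) = 1)
    (hinv : ∀ F : M → ℝ, (∃ B, ∀ x, |F x| ≤ B) → ∀ g : M, m (fun h => F (g * h)) = m F)
    (f : M → ℝ)
    (hqc : ∃ C : ℝ, ∀ g h : M, |f g + f h - f (g * h)| ≤ C)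
    (hhom : ∀ (g : M) (n : ℤ), f (g ^ n) = n * f g) :
    (∀ g : M, f g = m (fun h => f (g * h) - f h)) ∧
    (∀ g h : M, f (g * h) = f g + f h) := by
  obtain ⟨C, hC⟩ := hqc
  -- m of a constant
  have hconst : ∀ c : ℝ, m (fun _ => c) = c := by
    intro c
    have h1 : m (c • (fun _ => (1:ℝ))) = c * m (fun _ => (1:ℝ)) :=
      hsmul c _ ⟨1, fun x => by simp⟩
    have h2 : (c • (fun _ : M => (1:ℝ))) = fun _ => c := by
      funext x; simp
    rw [h2, hone] at h1; simpa using h1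
  -- key estimate
  have key : ∀ (F : M → ℝ) (c C' : ℝ), (∃ B, ∀ x, |F x| ≤ B) →
      (∀ x, |F x - c| ≤ C') → |m F - c| ≤ C' := by
    intro F c C' ⟨B, hB⟩ hFc
    have hbd : ∃ B, ∀ x, |F x| ≤ B := ⟨B, hB⟩
    have hnegF : m (-F) = - m F := by
      have := hsmul (-1) F hbd
      have h2 : ((-1 : ℝ) • F) = -F := by funext x; simp
      rw [h2] at this; linarith
    have hnegbd : ∃ B', ∀ x, |(-F) x| ≤ B' := ⟨B, fun x => by simpa using hB x⟩
    -- upper bound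
    have hGeq : (fun x => c + C' - F x) = (fun _ : M => c + C') + (-F) := by
      funext x; simp [Pi.add_apply]; ring
    have hup : 0 ≤ m (fun x => c + C' - F x) := by
      apply hpos _ ⟨|c + C'| + B, fun x => ?_⟩ fun x => ?_
      · calc |c + C' - F x| ≤ |c + C'| + |F x| := abs_sub _ _
          _ ≤ |c + C'| + B := by linarith [hB x]
      · have := abs_le.mp (hFc x)
        linarith [this.2]
    have hup' : m (fun x => c + C' - F x) = (c + C') - m F := by
      rw [hGeq, hadd _ _ ⟨|c + C'|, fun x => le_refl _⟩ hnegbd, hconst, hnegF]; ring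
    -- lower bound
    have hHeq : (fun x => F x + (C' - c)) = F + (fun _ : M => C' - c) := by
      funext x; simp [Pi.add_apply]
    have hlo : 0 ≤ m (fun x => F x + (C' - c)) := by
      apply hpos _ ⟨B + |C' - c|, fun x => ?_⟩ fun x => ?_
      · calc |F x + (C' - c)| ≤ |F x| + |C' - c| := abs_add_le _ _
          _ ≤ B + |C' - c| := by linarith [hB x]
      · have := abs_le.mp (hFc x)
        linarith [this.1]
    have hlo' : m (fun x => F x + (C' - c)) = m F + (C' - c) := by
      rw [hHeq, hadd _ _ hbd ⟨|C' - c|, fun x => le_refl _⟩, hconst]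
    rw [hup'] at hup; rw [hlo'] at hlo
    exact abs_le.mpr ⟨by linarith, by linarith⟩
  -- the functions and their bounds
  set F : M → M → ℝ := fun g h => f (g * h) - f h with hF
  have hFc : ∀ g h, |F g h - f g| ≤ C := by
    intro g h
    have := hC g h
    have h2 : |F g h - f g| = |f g + f h - f (g * h)| := by
      rw [← abs_neg]; simp only [hF]; ring_nf
    rw [h2]; exact this
  have hFbd : ∀ g, ∃ B, ∀ h, |F g h| ≤ B := by
    intro g
    refine ⟨|f g| + C, fun h => ?_⟩
    calc |F g h| = |(F g h - f g) + f g| := by ring_nf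
      _ ≤ |F g h - f g| + |f g| := abs_add_le _ _
      _ ≤ |f g| + C := by linarith [hFc g h]
  set φ : M → ℝ := fun g => m (F g) with hφ
  have hclose : ∀ g, |φ g - f g| ≤ C := fun g => key (F g) (f g) C (hFbd g) (hFc g)
  -- φ is a homomorphism
  have hφhom : ∀ g₁ g₂, φ (g₁ * g₂) = φ g₁ + φ g₂ := by
    intro g₁ g₂
    have hsplit : F (g₁ * g₂) = (fun h => F g₁ (g₂ * h)) + F g₂ := by
      funext h
      simp only [hF, Pi.add_apply, mul_assoc]
      ring
    have hbd1 : ∃ B, ∀ h, |F g₁ (g₂ * h)| ≤ B := by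
      obtain ⟨B, hB⟩ := hFbd g₁; exact ⟨B, fun h => hB _⟩
    calc φ (g₁ * g₂) = m (F (g₁ * g₂)) := rfl
      _ = m ((fun h => F g₁ (g₂ * h)) + F g₂) := by rw [hsplit]
      _ = m (fun h => F g₁ (g₂ * h)) + m (F g₂) := hadd _ _ hbd1 (hFbd g₂)
      _ = φ g₁ + φ g₂ := by rw [hinv (F g₁) (hFbd g₁) g₂]
  have hφone : φ 1 = 0 := by
    have : F 1 = fun _ => (0:ℝ) := by funext h; simp [hF]
    rw [hφ]; simp only [this]; exact hconst 0
  have hφpow : ∀ g, ∀ n : ℕ, φ (g ^ n) = n * φ g := by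
    intro g n
    induction n with
    | zero => simpa using hφone
    | succ k ih =>
      rw [pow_succ, hφhom, ih]; push_cast; ring
  -- φ = f
  have hφf : ∀ g, φ g = f g := by
    intro g
    by_contra hne
    have ha : 0 < |φ g - f g| := abs_pos.mpr (sub_ne_zero.mpr hne)
    obtain ⟨n, hn⟩ := exists_nat_gt (C / |φ g - f g|)
    have hn' : C < n * |φ g - f g| := by
      rw [div_lt_iff₀ ha] at hn; linarith
    have := hclose (g ^ n)
    rw [hφpow g n] at this
    have hfpow : f (g ^ n) = n * f g := by
      have := hhom g (n : ℤ)
      rw [zpow_natCast] at this; push_cast at this; exact this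
    rw [hfpow] at this
    have : |(n : ℝ) * (φ g - f g)| ≤ C := by
      have h2 : (n : ℝ) * φ g - n * f g = n * (φ g - f g) := by ring
      rwa [h2] at this
    rw [abs_mul, abs_of_nonneg (by positivity : (0:ℝ) ≤ (n:ℝ))] at this
    linarith
  refine ⟨fun g => (hφf g).symm, fun g h => ?_⟩
  rw [← hφf g, ← hφf h, ← hφf (g * h), hφhom]
end

section
/- Let H be a locally compact group and α ∈ Aut(H) a compacting automorphism (there exists a compact V ⊆ H such that for each g ∈ H, αⁿ(g) ∈ V for all sufficiently large n). Then H admits a compact subset A into which α is confining, i.e., α(A) ⊆ A, H = ⋃_{n≥0} α⁻ⁿ(A), and α^{n₀}(A·A) ⊆ A for some n₀ ≥ 0. -/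
open scoped Pointwise

/-- A compacting automorphism of a locally compact group is confining into some compact
subset: there is a compact `A` with `α(A) ⊆ A`, `H = ⋃_{n≥0} α⁻ⁿ(A)` and
`α^{n₀}(A·A) ⊆ A` for some `n₀ ≥ 0`. -/
theorem stmt_7 {H : Type*} [Group H] [TopologicalSpace H] [IsTopologicalGroup H]
    [LocallyCompactSpace H] [T2Space H]
    (α : MulAut H) (hc : Continuous ⇑α) (hc' : Continuous ⇑α.symm)
    (hcpt : ∃ V : Set H, IsCompact V ∧
      ∀ g : H, ∃ N : ℕ, ∀ n : ℕ, N < n → (α ^ n) g ∈ V) :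
    ∃ A : Set H, IsCompact A ∧ ⇑α '' A ⊆ A ∧ (∀ g : H, ∃ n : ℕ, (α ^ n) g ∈ A) ∧
      ∃ n₀ : ℕ, ⇑(α ^ n₀) '' (A * A) ⊆ A := by
  classical
  obtain ⟨V₀, hV₀, habs₀⟩ := hcpt
  -- WLOG `1 ∈ V`
  set V : Set H := V₀ ∪ {1} with hVdef
  have hV : IsCompact V := hV₀.union isCompact_singleton
  have h1V : (1 : H) ∈ V := Or.inr rfl
  have habs : ∀ g : H, ∃ N : ℕ, ∀ n : ℕ, N < n → (α ^ n) g ∈ V := by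
    intro g
    obtain ⟨N, hN⟩ := habs₀ g
    exact ⟨N, fun n hn => Or.inl (hN n hn)⟩
  choose Nf hNf using habs
  -- continuity of powers of α
  have hcont : ∀ n : ℕ, Continuous ⇑(α ^ n) := by
    intro n
    induction n with
    | zero =>
      have : ⇑(α ^ (0 : ℕ)) = id := by
        funext x; simp
      rw [this]; exact continuous_id
    | succ k ih =>
      have : ⇑(α ^ (k + 1)) = ⇑(α ^ k) ∘ ⇑α := by
        funext x; simp [pow_succ]
      rw [this]; exact ih.comp hc
  -- the closed sets S N
  set S : ℕ → Set H := fun N => {g | ∀ n : ℕ, N < n → (α ^ n) g ∈ V} with hSdef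
  have hSclosed : ∀ N, IsClosed (S N) := by
    intro N
    have hrw : S N = ⋂ n, ⋂ (_ : N < n), (⇑(α ^ n)) ⁻¹' V := by
      ext g
      simp [hSdef, Set.mem_iInter]
    rw [hrw]
    exact isClosed_iInter fun n => isClosed_iInter fun _ =>
      hV.isClosed.preimage (hcont n)
  have hScover : (⋃ N, S N) = Set.univ := by
    ext g
    simp only [Set.mem_iUnion, Set.mem_univ, iff_true]
    exact ⟨Nf g, fun n hn => hNf g n hn⟩
  obtain ⟨N, u, hu⟩ := nonempty_interior_of_iUnion_of_closed hSclosed hScover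
  -- key uniformity lemma: compact sets are eventually uniformly mapped into V * V
  have key : ∀ C : Set H, IsCompact C →
      ∃ M : ℕ, ∀ n : ℕ, M < n → ⇑(α ^ n) '' C ⊆ V * V := by
    intro C hC
    have hucov : ∀ c ∈ C, {x | u * c⁻¹ * x ∈ interior (S N)} ∈ nhds c := by
      intro c _
      have hopen : IsOpen {x | u * c⁻¹ * x ∈ interior (S N)} :=
        isOpen_interior.preimage (continuous_const.mul continuous_id)
      have hmem : c ∈ {x | u * c⁻¹ * x ∈ interior (S N)} := by
        simp only [Set.mem_setOf_eq, mul_assoc, inv_mul_cancel, mul_one]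
        exact hu
      exact hopen.mem_nhds hmem
    obtain ⟨t, _, hcov⟩ :=
      hC.elim_nhds_subcover (fun c => {x | u * c⁻¹ * x ∈ interior (S N)}) hucov
    refine ⟨(t.sup fun c => Nf (c * u⁻¹)) ⊔ N, ?_⟩
    rintro n hn x ⟨y, hy, rfl⟩
    have hy' := hcov hy
    simp only [Set.mem_iUnion] at hy'
    obtain ⟨c, hct, hyc⟩ := hy'
    have hdecomp : y = (c * u⁻¹) * (u * c⁻¹ * y) := by group
    have h1 : (α ^ n) (c * u⁻¹) ∈ V := by
      refine hNf _ n (lt_of_le_of_lt ?_ hn)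
      exact le_sup_of_le_left (Finset.le_sup (f := fun c => Nf (c * u⁻¹)) hct)
    have h2 : (α ^ n) (u * c⁻¹ * y) ∈ V := by
      have hS : u * c⁻¹ * y ∈ S N := interior_subset hyc
      exact hS n (lt_of_le_of_lt le_sup_right hn)
    have : (α ^ n) y = (α ^ n) (c * u⁻¹) * (α ^ n) (u * c⁻¹ * y) := by
      rw [← map_mul, ← hdecomp]
    rw [this]
    exact Set.mul_mem_mul h1 h2
  -- the compact set Q = V * V
  set Q : Set H := V * V with hQdef
  have hQc : IsCompact Q := hV.mul hV
  have h1Q : (1 : H) ∈ Q := by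
    have : (1 : H) = 1 * 1 := (mul_one 1).symm
    rw [this]; exact Set.mul_mem_mul h1V h1V
  have hVQ : V ⊆ Q := by
    intro v hv
    have : v = v * 1 := (mul_one v).symm
    rw [this]; exact Set.mul_mem_mul hv h1V
  have hQQQ : Q ⊆ Q * Q := by
    intro q hq
    have : q = q * 1 := (mul_one q).symm
    rw [this]; exact Set.mul_mem_mul hq h1Q
  obtain ⟨m, hm⟩ := key (Q * Q) (hQc.mul hQc)
  -- the confining compact set A
  set A : Set H := ⋃ j : Fin (m + 1), ⇑(α ^ (j : ℕ)) '' Q with hAdef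
  have hQA : Q ⊆ A := by
    intro q hq
    refine Set.mem_iUnion.2 ⟨⟨0, Nat.succ_pos m⟩, q, hq, ?_⟩
    simp
  have hAc : IsCompact A := isCompact_iUnion fun j => hQc.image (hcont j)
  refine ⟨A, hAc, ?_, ?_, ?_⟩
  · -- α '' A ⊆ A
    rintro x ⟨y, hy, rfl⟩
    rw [hAdef] at hy
    simp only [Set.mem_iUnion] at hy
    obtain ⟨j, q, hq, rfl⟩ := hy
    have hstep : α ((α ^ (j : ℕ)) q) = (α ^ ((j : ℕ) + 1)) q := by
      rw [pow_succ']; rfl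
    rw [hstep]
    rcases lt_or_ge ((j : ℕ) + 1) (m + 1) with hlt | hle
    · exact Set.mem_iUnion.2 ⟨⟨(j : ℕ) + 1, hlt⟩, q, hq, rfl⟩
    · have hmlt : m < (j : ℕ) + 1 := by omega
      have : (α ^ ((j : ℕ) + 1)) q ∈ Q := by
        apply hm _ hmlt
        exact ⟨q, hQQQ hq, rfl⟩
      exact hQA this
  · -- absorbing
    intro g
    refine ⟨Nf g + 1, hQA (hVQ (hNf g (Nf g + 1) (Nat.lt_succ_self _)))⟩
  · -- α^{n₀}(A * A) ⊆ A
    obtain ⟨M, hM⟩ := key (A * A) (hAc.mul hAc)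
    refine ⟨M + 1, ?_⟩
    intro x hx
    exact hQA (hM (M + 1) (Nat.lt_succ_self _) hx)
end

section
/- Let α be a compacting automorphism of a locally compact group H with compact vacuum set Ω (for every compact M ⊆ H, αⁿ(M) ⊆ Ω for all sufficiently large n). Then L = ⋂_{n∈ℤ} αⁿ(Ω) is a compact α-invariant subgroup of H, and it contains every α-invariant compact subgroup of H. -/
open scoped Pointwise

section Aux

variable {H : Type*} [Group H] (α : MulAut H)

lemma aux_coe_mul (f g : MulAut H) : ⇑(f * g) = ⇑f ∘ ⇑g := rfl

lemma aux_img_img (j n : ℤ) (S : Set H) :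
    ⇑(α ^ j) '' (⇑(α ^ n) '' S) = ⇑(α ^ (j + n)) '' S := by
  rw [← Set.image_comp, ← aux_coe_mul, ← zpow_add]

lemma aux_inv_image (K : Set H) (h : ⇑α '' K = K) : ⇑α.symm '' K = K := by
  conv_lhs => rw [← h]
  rw [← Set.image_comp]
  simp

lemma aux_zpow_image (K : Set H) (h : ⇑α '' K = K) : ∀ j : ℤ, ⇑(α ^ j) '' K = K := by
  intro j
  induction j using Int.induction_on with
  | zero => simp
  | succ k ih =>
      rw [zpow_add_one, aux_coe_mul, Set.image_comp]
      rw [h, ih]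
  | pred k ih =>
      rw [zpow_sub_one, aux_coe_mul, Set.image_comp]
      have : ⇑α⁻¹ = ⇑α.symm := rfl
      rw [this, aux_inv_image α K h, ih]

end Aux

/-- If `Ω` is a compact (symmetric, containing 1) vacuum set for the compaction `α` of the
locally compact group `H`, then `L = ⋂_{n∈ℤ} αⁿ(Ω)` is a compact `α`-invariant subgroup of
`H` containing every `α`-invariant compact subgroup. -/
theorem stmt_8 {H : Type*} [Group H] [TopologicalSpace H] [IsTopologicalGroup H]
    [LocallyCompactSpace H] [T2Space H]
    (α : MulAut H) (hc : Continuous ⇑α) (hc' : Continuous ⇑α.symm)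
    (Ω : Set H) (hΩc : IsCompact Ω) (hΩsymm : Ω⁻¹ = Ω) (hΩone : (1 : H) ∈ Ω)
    (hvac : ∀ M : Set H, IsCompact M → ∃ N : ℕ, ∀ n : ℕ, N < n → ⇑(α ^ n) '' M ⊆ Ω) :
    ∃ L : Subgroup H, (L : Set H) = ⋂ n : ℤ, ⇑(α ^ n) '' Ω ∧
      IsCompact (L : Set H) ∧ ⇑α '' (L : Set H) = (L : Set H) ∧
      ∀ K : Subgroup H, IsCompact (K : Set H) → ⇑α '' (K : Set H) = (K : Set H) → K ≤ L := by
  -- continuity of all integer powers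
  have hcont : ∀ n : ℤ, Continuous ⇑(α ^ n) := by
    intro n
    induction n using Int.induction_on with
    | zero => simpa using continuous_id
    | succ k ih =>
        rw [zpow_add_one, aux_coe_mul]
        exact ih.comp hc
    | pred k ih =>
        rw [zpow_sub_one, aux_coe_mul]
        have : ⇑(α⁻¹) = ⇑α.symm := rfl
        rw [this]
        exact ih.comp hc'
  set Ls : Set H := ⋂ n : ℤ, ⇑(α ^ n) '' Ω with hLs
  have hmemL : ∀ x, x ∈ Ls ↔ ∀ n : ℤ, x ∈ ⇑(α ^ n) '' Ω := fun x => Set.mem_iInter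
  -- multiplicative closure
  obtain ⟨N, hN⟩ := hvac (Ω * Ω) (hΩc.mul hΩc)
  have hmul : ∀ x y, x ∈ Ls → y ∈ Ls → x * y ∈ Ls := by
    intro x y hx hy
    rw [hmemL] at hx hy ⊢
    intro m
    obtain ⟨a, ha, hax⟩ := hx (m + (N + 1 : ℕ))
    obtain ⟨b, hb, hby⟩ := hy (m + (N + 1 : ℕ))
    have hab : (α ^ ((N + 1 : ℕ) : ℤ)) (a * b) ∈ Ω := by
      rw [zpow_natCast]
      exact hN (N + 1) (Nat.lt_succ_self N) ⟨a * b, Set.mul_mem_mul ha hb, rfl⟩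
    refine ⟨(α ^ ((N + 1 : ℕ) : ℤ)) (a * b), hab, ?_⟩
    have : (α ^ m) ((α ^ ((N + 1 : ℕ) : ℤ)) (a * b)) = (α ^ (m + ((N + 1 : ℕ) : ℤ))) (a * b) := by
      rw [zpow_add]; rfl
    rw [this, map_mul, hax, hby]
  have hinv : ∀ x, x ∈ Ls → x⁻¹ ∈ Ls := by
    intro x hx
    rw [hmemL] at hx ⊢
    intro n
    obtain ⟨a, ha, hax⟩ := hx n
    have ha' : a⁻¹ ∈ Ω := by rw [← hΩsymm]; simpa using ha
    exact ⟨a⁻¹, ha', by rw [map_inv, hax]⟩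
  have hone : (1 : H) ∈ Ls := by
    rw [hmemL]; intro n; exact ⟨1, hΩone, map_one _⟩
  refine ⟨{ carrier := Ls, mul_mem' := fun ha hb => hmul _ _ ha hb,
            one_mem' := hone, inv_mem' := fun ha => hinv _ ha }, rfl, ?_, ?_, ?_⟩
  · -- compactness
    have hclosed : IsClosed Ls :=
      isClosed_iInter fun n => (hΩc.image (hcont n)).isClosed
    have hsub : Ls ⊆ Ω := by
      intro x hx
      have := (hmemL x).mp hx 0
      simpa using this
    exact hΩc.of_isClosed_subset hclosed hsub
  · -- invariance
    have hbij : Function.Bijective ⇑α := α.bijective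
    have key : ∀ j : ℤ, ⇑(α ^ j) '' Ls = Ls := by
      intro j
      have himg : ⇑(α ^ j) '' Ls = ⋂ n : ℤ, ⇑(α ^ j) '' (⇑(α ^ n) '' Ω) :=
        Set.image_iInter (α ^ j).bijective _
      rw [himg, hLs]
      ext x
      simp only [Set.mem_iInter, aux_img_img]
      constructor
      · intro h m
        have heq : j + (m - j) = m := by ring
        have := h (m - j)
        rwa [heq] at this
      · intro h n
        exact h (j + n)
    have := key 1
    rwa [zpow_one] at this
  · -- maximality
    intro K hK hKinv x hx
    show x ∈ Ls
    rw [hmemL]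
    intro n
    obtain ⟨N', hN'⟩ := hvac (K : Set H) hK
    have h1 : ⇑(α ^ ((N' + 1 : ℕ) : ℤ)) '' (K : Set H) ⊆ Ω := by
      rw [zpow_natCast]
      exact hN' (N' + 1) (Nat.lt_succ_self N')
    have h2 : ⇑(α ^ n) '' (⇑(α ^ ((N' + 1 : ℕ) : ℤ)) '' (K : Set H)) = (K : Set H) := by
      rw [aux_img_img, aux_zpow_image α (K : Set H) hKinv]
    exact Set.image_mono h1 (by rw [h2]; exact hx)
end

section
/- Let K be a compact normal subgroup of a locally compact group H invariant under α ∈ Aut(H). Then α is compacting on H if and only if the induced automorphism of H/K is compacting. -/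
open Pointwise


/-- `f` is a compacting self-map: some compact `V` eventually absorbs every forward orbit. -/
def CompactingFun {X : Type*} [TopologicalSpace X] (f : X → X) : Prop :=
  ∃ V : Set X, IsCompact V ∧ ∀ g : X, ∃ N : ℕ, ∀ n : ℕ, N < n → f^[n] g ∈ V

/-- If `K` is a compact normal `α`-invariant subgroup of a locally compact group `H`, then
`α` is compacting on `H` iff the induced automorphism of `H ⧸ K` is compacting. -/
theorem stmt_10 {H : Type*} [Group H] [TopologicalSpace H] [IsTopologicalGroup H]
    [LocallyCompactSpace H] [T2Space H]
    (α : MulAut H) (hc : Continuous ⇑α) (hc' : Continuous ⇑α.symm)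
    (K : Subgroup H) [K.Normal] (hKc : IsCompact (K : Set H))
    (hinv : ∀ k : H, k ∈ K ↔ α k ∈ K) :
    CompactingFun ⇑α ↔
      CompactingFun
        ⇑(QuotientGroup.map K K α.toMonoidHom (fun k hk => (hinv k).mp hk)) := by
  set β := QuotientGroup.map K K α.toMonoidHom (fun k hk => (hinv k).mp hk) with hβ
  have hcomm : ∀ (n : ℕ) (g : H), (⇑β)^[n] (↑g : H ⧸ K) = ↑(α^[n] g) := by
    intro n
    induction n with
    | zero => intro g; simp
    | succ n ih =>
      intro g
      rw [Function.iterate_succ_apply, Function.iterate_succ_apply]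
      have : β (↑g : H ⧸ K) = ↑(α g) := rfl
      rw [this, ih]
  constructor
  · rintro ⟨V, hVc, hV⟩
    refine ⟨(↑· : H → H ⧸ K) '' V, hVc.image continuous_quotient_mk', ?_⟩
    intro x
    obtain ⟨g, rfl⟩ := QuotientGroup.mk_surjective x
    obtain ⟨N, hN⟩ := hV g
    exact ⟨N, fun n hn => by rw [hcomm]; exact ⟨_, hN n hn, rfl⟩⟩
  · rintro ⟨W, hWc, hW⟩
    -- lift W under a compact set
    have hnhds : ∀ w ∈ W, ∃ C : Set H, IsCompact C ∧
        ((↑· : H → H ⧸ K) '' C) ∈ nhds w := by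
      intro w _
      obtain ⟨g, rfl⟩ := QuotientGroup.mk_surjective w
      obtain ⟨C, hCc, hCn⟩ := exists_compact_mem_nhds g
      exact ⟨C, hCc, QuotientGroup.isOpenMap_coe.image_mem_nhds hCn⟩
    choose C hCc hCn using hnhds
    obtain ⟨t, htW⟩ := hWc.elim_nhds_subcover' (fun w hw => (↑· : H → H ⧸ K) '' C w hw)
      (fun w hw => hCn w hw)
    set S : Set H := ⋃ w ∈ t, C w w.2 with hS
    have hSc : IsCompact S := t.isCompact_biUnion (fun w _ => hCc w _)
    have hWS : W ⊆ (↑· : H → H ⧸ K) '' S := by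
      intro x hx
      have hx' := htW hx
      simp only [Set.mem_iUnion, Set.mem_image] at hx'
      obtain ⟨w, hw, s, hs, hsx⟩ := hx'
      exact ⟨s, Set.mem_biUnion hw hs, hsx⟩
    refine ⟨S * (K : Set H), hSc.mul hKc, ?_⟩
    intro g
    obtain ⟨N, hN⟩ := hW (↑g)
    refine ⟨N, fun n hn => ?_⟩
    have h1 : ((↑(α^[n] g) : H ⧸ K)) ∈ W := by rw [← hcomm]; exact hN n hn
    obtain ⟨s, hs, hseq⟩ := hWS h1
    have hk : s⁻¹ * α^[n] g ∈ K := QuotientGroup.eq.mp hseq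
    exact ⟨s, hs, s⁻¹ * α^[n] g, hk, by group⟩
end

section
/- If a locally compact group H admits a compacting automorphism α, then H has polynomial growth: for every compact subset V of H, the Haar measure of Vⁿ is bounded by a polynomial in n of degree depending only on H and α. Concretely, if α(V·V) ⊆ V and α scales left Haar measure by 1/c with c ≥ 1, then λ(Vⁿ) ≤ λ(V)·c·n^{log₂ c} for all n ≥ 1. -/
open scoped Pointwise
open MeasureTheory

/-- A locally compact group with a compacting automorphism has polynomial growth:
if `V` is compact with `α(V·V) ⊆ V` and `α` scales left Haar measure by `1/c` (`c ≥ 1`),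
then `λ(Vⁿ) ≤ λ(V)·c·n^{log₂ c}` for all `n ≥ 1`. -/
theorem stmt_11 {H : Type*} [Group H] [TopologicalSpace H] [IsTopologicalGroup H]
    [LocallyCompactSpace H] [T2Space H] [MeasurableSpace H] [BorelSpace H]
    (μ : MeasureTheory.Measure H) [μ.IsHaarMeasure]
    (α : MulAut H) (hc : Continuous ⇑α) (hc' : Continuous ⇑α.symm)
    (hcpt : ∃ W : Set H, IsCompact W ∧ ∀ g : H, ∃ N : ℕ, ∀ n : ℕ, N < n → (α ^ n) g ∈ W)
    (V : Set H) (hVc : IsCompact V) (hV : ⇑α '' (V * V) ⊆ V)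
    (c : NNReal) (hc1 : 1 ≤ c)
    (hscale : ∀ s : Set H, μ (⇑α '' s) = μ s / (c : ENNReal)) :
    ∀ n : ℕ, 1 ≤ n → μ (V ^ n) ≤ μ V * (c : ENNReal) * (n : ENNReal) ^ (Real.logb 2 (c : ℝ)) := by
  intro n hn
  have hc0 : (0:ℝ) < (c:ℝ) := lt_of_lt_of_le one_pos (by exact_mod_cast hc1)
  have hcne : (c : ENNReal) ≠ 0 := by
    simpa using (lt_of_lt_of_le zero_lt_one (by exact_mod_cast hc1 : (1:ENNReal) ≤ c)).ne'
  have hctop : (c : ENNReal) ≠ ⊤ := ENNReal.coe_ne_top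
  -- trivial case : V empty
  rcases Set.eq_empty_or_nonempty V with hV0 | ⟨v₀, hv₀⟩
  · have : V ^ n = ∅ := by
      rw [hV0]; exact Set.empty_pow (by omega)
    simp [this]
  -- Lemma A : iterated scaling
  have scaleA : ∀ (k : ℕ) (s : Set H), μ ((⇑(α ^ k)) '' s) = μ s / (c : ENNReal) ^ k := by
    intro k
    induction k with
    | zero => intro s; simp
    | succ k ih =>
      intro s
      have hco : ⇑(α ^ (k+1)) = ⇑(α ^ k) ∘ ⇑α := by
        funext x; simp [pow_succ, MulAut.mul_apply]
      rw [hco, Set.image_comp, ih, hscale, pow_succ, div_eq_mul_inv, div_eq_mul_inv,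
        div_eq_mul_inv, ENNReal.mul_inv (Or.inr ENNReal.coe_ne_top) (Or.inr hcne)]
      ring
  -- Lemma : (V*V)^m = V^(2*m)
  have hVV : ∀ m : ℕ, (V * V) ^ m = V ^ (2 * m) := by
    intro m
    induction m with
    | zero => simp
    | succ m ih =>
      rw [pow_succ, ih, Nat.mul_succ, pow_add, pow_two]
  -- Lemma B : α^k (V^(2^k)) ⊆ V
  have keyB : ∀ k : ℕ, (⇑(α ^ k)) '' (V ^ (2 ^ k)) ⊆ V := by
    intro k
    induction k with
    | zero => simp
    | succ k ih =>
      have hco : ⇑(α ^ (k+1)) = ⇑(α ^ k) ∘ ⇑α := by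
        funext x; simp [pow_succ, MulAut.mul_apply]
      rw [hco, Set.image_comp]
      have h1 : ⇑α '' (V ^ (2 ^ (k+1))) ⊆ V ^ (2 ^ k) := by
        have : V ^ (2 ^ (k+1)) = (V * V) ^ (2 ^ k) := by
          rw [hVV, pow_succ, mul_comm]
        rw [this, Set.image_pow]
        exact Set.pow_subset_pow_left hV
      exact (Set.image_mono h1).trans ih
  -- Monotonicity of μ (V ^ ·)
  have mono : ∀ m l : ℕ, l ≤ m → μ (V ^ l) ≤ μ (V ^ m) := by
    intro m l hlm
    have hsub : (v₀ ^ (m - l)) • (V ^ l) ⊆ V ^ m := by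
      intro x hx
      rcases hx with ⟨y, hy, rfl⟩
      have h1 : v₀ ^ (m - l) ∈ V ^ (m - l) := Set.pow_mem_pow hv₀
      have := Set.mul_mem_mul h1 hy
      rwa [← pow_add, Nat.sub_add_cancel hlm] at this
    calc μ (V ^ l) = μ ((v₀ ^ (m - l)) • (V ^ l)) :=
          (MeasureTheory.measure_smul μ (v₀ ^ (m - l)) (V ^ l)).symm
      _ ≤ μ (V ^ m) := measure_mono hsub
  set k := Nat.clog 2 n with hk
  have hn2k : n ≤ 2 ^ k := Nat.le_pow_clog one_lt_two n
  have step1 : μ (V ^ n) ≤ μ (V ^ (2 ^ k)) := mono _ _ hn2k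
  have step2 : μ (V ^ (2 ^ k)) ≤ μ V * (c : ENNReal) ^ k := by
    have h := measure_mono (μ := μ) (keyB k)
    rw [scaleA] at h
    rw [ENNReal.div_le_iff (pow_ne_zero _ hcne) (by simp)] at h
    simpa [mul_comm] using h
  -- the exponent inequality
  have hLnn : 0 ≤ Real.logb 2 (c : ℝ) :=
    Real.logb_nonneg one_lt_two (by exact_mod_cast hc1)
  have expineq : (c : ENNReal) ^ k ≤ (c : ENNReal) * (n : ENNReal) ^ (Real.logb 2 (c : ℝ)) := by
    rcases eq_or_lt_of_le hn with h1 | h2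
    · -- n = 1
      have : k = 0 := by rw [hk, ← h1]; simp
      rw [this, pow_zero, ← h1]
      simp only [Nat.cast_one, ENNReal.one_rpow, mul_one]
      exact_mod_cast hc1
    · -- 1 < n
      have hk1 : 1 ≤ k := by
        rw [hk]
        exact Nat.clog_pos one_lt_two h2
      have hlt : 2 ^ (k - 1) < n := Nat.pow_pred_clog_lt_self one_lt_two h2
      -- real inequality : c ^ (k-1) ≤ n ^ logb 2 c
      have hreal : (c : ℝ) ^ (k - 1) ≤ (n : ℝ) ^ (Real.logb 2 (c : ℝ)) := by
        have e1 : ((2:ℝ) ^ (k - 1)) ^ (Real.logb 2 (c : ℝ)) = (c : ℝ) ^ (k - 1) := by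
          rw [← Real.rpow_natCast (2:ℝ) (k-1), ← Real.rpow_mul (by norm_num), mul_comm,
            Real.rpow_mul (by norm_num), Real.rpow_logb (by norm_num) (by norm_num) hc0,
            Real.rpow_natCast]
        rw [← e1]
        exact Real.rpow_le_rpow (by positivity)
          (by exact_mod_cast hlt.le) hLnn
      have hEN : (c : ENNReal) ^ (k - 1) ≤ (n : ENNReal) ^ (Real.logb 2 (c : ℝ)) := by
        have hcpow : (c : ENNReal) ^ (k - 1) = ENNReal.ofReal ((c:ℝ) ^ (k-1)) := by
          rw [ENNReal.ofReal_pow hc0.le, ENNReal.ofReal_coe_nnreal]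
        have hnpow : (n : ENNReal) ^ (Real.logb 2 (c : ℝ))
            = ENNReal.ofReal ((n:ℝ) ^ (Real.logb 2 (c : ℝ))) := by
          rw [← ENNReal.ofReal_natCast, ENNReal.ofReal_rpow_of_pos (by positivity)]
        rw [hcpow, hnpow]
        exact ENNReal.ofReal_le_ofReal hreal
      calc (c : ENNReal) ^ k = (c : ENNReal) * (c : ENNReal) ^ (k - 1) := by
            rw [← pow_succ', Nat.sub_add_cancel hk1]
        _ ≤ (c : ENNReal) * (n : ENNReal) ^ (Real.logb 2 (c : ℝ)) :=
            mul_le_mul_right hEN _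
  calc μ (V ^ n) ≤ μ V * (c : ENNReal) ^ k := step1.trans step2
    _ ≤ μ V * ((c : ENNReal) * (n : ENNReal) ^ (Real.logb 2 (c : ℝ))) :=
        mul_le_mul_right expineq _
    _ = μ V * (c : ENNReal) * (n : ENNReal) ^ (Real.logb 2 (c : ℝ)) := by rw [mul_assoc]
end

section
/- Let X be a proper geodesic hyperbolic metric space, G ≤ Isom(X) a closed subgroup whose orbits are quasi-convex, and suppose the limit set ∂_X G equals all of ∂X. Then G acts cocompactly on X. -/
open Filter Topology

/-- The Gromov product `(y|z)_x`. -/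
noncomputable def gp {X : Type*} [MetricSpace X] (x y z : X) : ℝ :=
  (dist x y + dist x z - dist y z) / 2


section Helpers
variable {X : Type*} [MetricSpace X]

lemma gp_nonneg (x y z : X) : 0 ≤ gp x y z := by
  have h := dist_triangle y x z
  simp only [gp]
  rw [dist_comm y x] at h
  linarith

lemma gp_comm (x y z : X) : gp x y z = gp x z y := by
  simp only [gp, dist_comm y z]
  ring

lemma gp_le_left (x y z : X) : gp x y z ≤ dist x y := by
  have h := dist_triangle x y z
  simp only [gp]; linarith

lemma gp_le_right (x y z : X) : gp x y z ≤ dist x z := by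
  have h := dist_triangle x z y
  rw [dist_comm z y] at h
  simp only [gp]; linarith

/-- a geodesic parametrized by arclength on `[0, dist a b]`. -/
def IsGeod (f : ℝ → X) (a b : X) : Prop :=
  f 0 = a ∧ f (dist a b) = b ∧
    ∀ s t : ℝ, s ∈ Set.Icc 0 (dist a b) → t ∈ Set.Icc 0 (dist a b) →
      dist (f s) (f t) = |s - t|

namespace IsGeod

variable {f : ℝ → X} {a b : X} {t : ℝ}

lemma dist_from (hf : IsGeod f a b) (ht : t ∈ Set.Icc 0 (dist a b)) :
    dist a (f t) = t := by
  have h := hf.2.2 0 t ⟨le_rfl, dist_nonneg⟩ ht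
  rw [hf.1] at h
  rw [h, abs_of_nonpos (by linarith [ht.1])]
  ring

lemma dist_to (hf : IsGeod f a b) (ht : t ∈ Set.Icc 0 (dist a b)) :
    dist (f t) b = dist a b - t := by
  have h := hf.2.2 t (dist a b) ht ⟨dist_nonneg, le_rfl⟩
  rw [hf.2.1] at h
  rw [h, abs_of_nonpos (by linarith [ht.2])]
  ring

lemma gp_eq (hf : IsGeod f a b) (ht : t ∈ Set.Icc 0 (dist a b)) :
    gp a (f t) b = t := by
  simp only [gp]
  rw [hf.dist_from ht, hf.dist_to ht]
  ring

lemma rev (hf : IsGeod f a b) : IsGeod (fun s => f (dist a b - s)) b a := by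
  obtain ⟨h0, hd, hiso⟩ := hf
  refine ⟨by simpa using hd, ?_, ?_⟩
  · rw [dist_comm b a]; simpa using h0
  · intro s t hs ht
    rw [dist_comm b a] at hs ht
    rw [hiso _ _ ⟨by linarith [hs.2], by linarith [hs.1]⟩
      ⟨by linarith [ht.2], by linarith [ht.1]⟩]
    rw [show dist a b - s - (dist a b - t) = t - s by ring, abs_sub_comm]

end IsGeod
variable {δ c : ℝ}

lemma gp_four (hδ0 : 0 ≤ δ)
    (hyp : ∀ x y z w : X, min (gp x y w) (gp x w z) - δ ≤ gp x y z)
    (x p a b q : X) :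
    min (gp x p a) (min (gp x a b) (gp x b q)) - 2*δ ≤ gp x p q := by
  have h1 := hyp x a q b
  have h2 := hyp x p q a
  have e1 : min (gp x p a) (min (gp x a b) (gp x b q)) - δ ≤ min (gp x p a) (gp x a q) := by
    refine le_min ?_ ?_
    · linarith [min_le_left (gp x p a) (min (gp x a b) (gp x b q))]
    · linarith [min_le_right (gp x p a) (min (gp x a b) (gp x b q))]
  linarith

lemma geod_close (hδ0 : 0 ≤ δ)
    (hyp : ∀ x y z w : X, min (gp x y w) (gp x w z) - δ ≤ gp x y z)
    {x a b : X} {f f₁ : ℝ → X} (hf : IsGeod f x a) (h1 : IsGeod f₁ x b)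
    {t : ℝ} (ht0 : 0 ≤ t) (ht : t ≤ gp x a b) :
    dist (f t) (f₁ t) ≤ 4*δ := by
  have hta : t ∈ Set.Icc 0 (dist x a) := ⟨ht0, le_trans ht (gp_le_left _ _ _)⟩
  have htb : t ∈ Set.Icc 0 (dist x b) := ⟨ht0, le_trans ht (gp_le_right _ _ _)⟩
  have k := gp_four hδ0 hyp x (f t) a b (f₁ t)
  have e1 : gp x (f t) a = t := hf.gp_eq hta
  have e2 : gp x b (f₁ t) = t := by rw [gp_comm]; exact h1.gp_eq htb
  have e3 : dist x (f t) = t := hf.dist_from hta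
  have e4 : dist x (f₁ t) = t := h1.dist_from htb
  have emin : t ≤ min (gp x (f t) a) (min (gp x a b) (gp x b (f₁ t))) :=
    le_min (by rw [e1]) (le_min ht (by rw [e2]))
  have : t - 2*δ ≤ gp x (f t) (f₁ t) := by linarith
  simp only [gp, e3, e4] at this
  linarith

lemma thin (hδ0 : 0 ≤ δ)
    (hyp : ∀ x y z w : X, min (gp x y w) (gp x w z) - δ ≤ gp x y z)
    {a b w : X} {f f₁ f₂ : ℝ → X}
    (hf : IsGeod f a b) (hf₁ : IsGeod f₁ a w) (hf₂ : IsGeod f₂ w b)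
    {t : ℝ} (ht : t ∈ Set.Icc 0 (dist a b)) :
    ∃ t', (t' ∈ Set.Icc 0 (dist a w) ∧ dist (f t) (f₁ t') ≤ 4*δ) ∨
      (t' ∈ Set.Icc 0 (dist w b) ∧ dist (f t) (f₂ t') ≤ 4*δ) := by
  rcases le_or_gt t (gp a b w) with hcase | hcase
  · exact ⟨t, Or.inl ⟨⟨ht.1, le_trans hcase (gp_le_right _ _ _)⟩,
      geod_close hδ0 hyp hf hf₁ ht.1 hcase⟩⟩
  · have key : dist a b - gp a b w = gp b a w := by
      simp only [gp, dist_comm b a, dist_comm b w]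
      ring
    have hs0 : 0 ≤ dist a b - t := by linarith [ht.2]
    have hs : dist a b - t ≤ gp b a w := by linarith
    have hrf := hf.rev
    have hrf₂ := hf₂.rev
    have hcl := geod_close hδ0 hyp hrf hrf₂ hs0 hs
    refine ⟨dist w b - (dist a b - t), Or.inr ⟨⟨?_, by linarith⟩, ?_⟩⟩
    · have := gp_le_right b a w
      rw [dist_comm b w] at this
      linarith
    · rw [show dist a b - (dist a b - t) = t by ring] at hcl
      exact hcl

lemma chainL4 (hδ0 : 0 ≤ δ) (hc0 : 0 ≤ c)
    (hyp : ∀ x y z w : X, min (gp x y w) (gp x w z) - δ ≤ gp x y z)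
    (hgeo' : ∀ x y : X, ∃ f, IsGeod f x y) :
    ∀ (h n : ℕ), n ≤ 2^h → ∀ σ : ℕ → X,
      (∀ i, i < n → dist (σ i) (σ (i+1)) ≤ c) →
      ∀ f, IsGeod f (σ 0) (σ n) → ∀ t ∈ Set.Icc 0 (dist (σ 0) (σ n)),
      ∃ i, i ≤ n ∧ dist (f t) (σ i) ≤ 4*δ*(h:ℝ) + c := by
  intro h
  induction h with
  | zero =>
    intro n hn σ hσ f hf t ht
    norm_num at hn
    interval_cases n
    · have ht0 : t = 0 := le_antisymm (by simpa using ht.2) ht.1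
      refine ⟨0, le_rfl, ?_⟩
      rw [ht0, hf.1]
      simp
      positivity
    · refine ⟨0, by norm_num, ?_⟩
      have := hf.dist_from ht
      rw [dist_comm] at this
      have hb := hσ 0 (by norm_num)
      simp only [Nat.cast_zero]
      rw [this]
      linarith [ht.2]
  | succ h IH =>
    intro n hn σ hσ f hf t ht
    by_cases hn0 : n = 0
    · subst hn0
      have ht0 : t = 0 := le_antisymm (by simpa using ht.2) ht.1
      refine ⟨0, le_rfl, ?_⟩
      rw [ht0, hf.1]
      simp
      positivity
    · set j := (n+1)/2 with hj
      have h2 : 2^(h+1) = 2*2^h := by ring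
      have hjn : j ≤ n := by omega
      have hj2 : j ≤ 2^h := by omega
      have hnj2 : n - j ≤ 2^h := by omega
      obtain ⟨f₁, hf₁⟩ := hgeo' (σ 0) (σ j)
      obtain ⟨f₂, hf₂⟩ := hgeo' (σ j) (σ n)
      obtain ⟨t', hth⟩ := thin hδ0 hyp hf hf₁ hf₂ ht
      rcases hth with ⟨ht', hclose⟩ | ⟨ht', hclose⟩
      · obtain ⟨i, hi, hdist⟩ := IH j hj2 σ (fun i hi => hσ i (lt_of_lt_of_le hi hjn))
          f₁ hf₁ t' ht'
        refine ⟨i, le_trans hi hjn, ?_⟩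
        have htri := dist_triangle (f t) (f₁ t') (σ i)
        push_cast
        linarith
      · set σ' : ℕ → X := fun i => σ (j + i) with hσ'
        have hσ'0 : σ' 0 = σ j := by simp [hσ']
        have hσ'n : σ' (n - j) = σ n := by simp only [hσ']; congr 1; omega
        have hf₂' : IsGeod f₂ (σ' 0) (σ' (n-j)) := by rw [hσ'0, hσ'n]; exact hf₂
        have ht'' : t' ∈ Set.Icc 0 (dist (σ' 0) (σ' (n-j))) := by
          rw [hσ'0, hσ'n]; exact ht'
        obtain ⟨i, hi, hdist⟩ := IH (n-j) hnj2 σ'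
          (fun i hi => hσ (j+i) (by omega)) f₂ hf₂' t' ht''
        refine ⟨j + i, by omega, ?_⟩
        have htri := dist_triangle (f t) (f₂ t') (σ' i)
        have : σ' i = σ (j+i) := rfl
        rw [this] at htri
        push_cast
        linarith

lemma discretize (hc : 1 ≤ c) {p q : X} {f : ℝ → X} (hf : IsGeod f p q) :
    ∃ (N : ℕ) (σ : ℕ → X), σ 0 = p ∧ σ N = q ∧ (N:ℝ) ≤ dist p q + 1 ∧
      (∀ i, i < N → dist (σ i) (σ (i+1)) ≤ c) ∧
      ∀ i, i ≤ N → dist p (σ i) ≤ dist p q ∧ dist (σ i) q ≤ dist p q := by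
  set L := dist p q with hL
  have hL0 : 0 ≤ L := dist_nonneg
  refine ⟨⌈L⌉₊, fun i => f (min (i:ℝ) L), ?_, ?_, ?_, ?_, ?_⟩
  · simp only [Nat.cast_zero, min_eq_left hL0]
    exact hf.1
  · show f (min ((⌈L⌉₊:ℕ):ℝ) L) = q
    rw [min_eq_right (Nat.le_ceil L)]
    exact hf.2.1
  · linarith [Nat.ceil_lt_add_one hL0]
  · intro i hi
    have hmem : ∀ k : ℕ, min (k:ℝ) L ∈ Set.Icc 0 L :=
      fun k => ⟨le_min (Nat.cast_nonneg k) hL0, min_le_right _ _⟩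
    rw [hf.2.2 _ _ (hmem i) (hmem (i+1))]
    rcases le_total ((i:ℝ)) L with hcase | hcase
    · have e1 : min ((i:ℝ)) L = i := min_eq_left hcase
      have e2 : (i:ℝ) ≤ min ((i:ℝ)+1) L := le_min (by linarith) hcase
      have e3 : min ((i:ℝ)+1) L ≤ (i:ℝ)+1 := min_le_left _ _
      rw [e1]
      push_cast
      rw [abs_le]
      constructor <;> linarith
    · have e1 : min ((i:ℝ)) L = L := min_eq_right hcase
      have e2 : min ((i:ℝ)+1) L = L := min_eq_right (by push_cast; linarith)
      rw [e1]
      push_cast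
      rw [e2]
      simpa using hc.trans' (by norm_num)
  · intro i hi
    have hmem : min ((i:ℝ)) L ∈ Set.Icc 0 L :=
      ⟨le_min (Nat.cast_nonneg i) hL0, min_le_right _ _⟩
    constructor
    · rw [hf.dist_from hmem]; exact hmem.2
    · rw [hf.dist_to hmem]; linarith [hmem.1]

lemma chain_append {σ σ' : ℕ → X} {n n' : ℕ} {P : X → Prop}
    (hjoin : σ n = σ' 0)
    (h1 : ∀ i, i < n → dist (σ i) (σ (i+1)) ≤ c)
    (h2 : ∀ i, i < n' → dist (σ' i) (σ' (i+1)) ≤ c)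
    (hP1 : ∀ i, i ≤ n → P (σ i)) (hP2 : ∀ i, i ≤ n' → P (σ' i)) :
    ∃ τ : ℕ → X, τ 0 = σ 0 ∧ τ (n + n') = σ' n' ∧
      (∀ i, i < n + n' → dist (τ i) (τ (i+1)) ≤ c) ∧
      (∀ i, i ≤ n + n' → P (τ i)) := by
  refine ⟨fun i => if i ≤ n then σ i else σ' (i - n), ?_, ?_, ?_, ?_⟩
  · simp
  · by_cases hn' : n' = 0
    · subst hn'
      simp [hjoin]
    · have : ¬ (n + n' ≤ n) := by omega
      simp only [this, if_false]
      congr 1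
      omega
  · intro i hi
    by_cases hc1 : i + 1 ≤ n
    · have hc0 : i ≤ n := by omega
      simp only [hc0, hc1, if_true]
      exact h1 i (by omega)
    · by_cases hc0 : i ≤ n
      · have hieq : i = n := by omega
        simp only [hc0, hc1, if_true, if_false]
        subst hieq
        rw [hjoin]
        have : i + 1 - i = 1 := by omega
        rw [this]
        exact h2 0 (by omega)
      · simp only [hc0, hc1, if_false]
        have e : i + 1 - n = (i - n) + 1 := by omega
        rw [e]
        exact h2 (i-n) (by omega)
  · intro i hi
    by_cases hc0 : i ≤ n
    · simp only [hc0, if_true]; exact hP1 i hc0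
    · simp only [hc0, if_false]; exact hP2 (i-n) (by omega)

end Helpers


set_option maxHeartbeats 2000000 in
/-- If `G` acts isometrically on a proper geodesic hyperbolic space `X` with quasi-convex
orbits and full limit set `∂_X G = ∂X`, then `G` acts cocompactly on `X`. -/
theorem stmt_12 {X G : Type*} [MetricSpace X] [ProperSpace X] [Nonempty X]
    [Group G] [MulAction G X]
    (hiso : ∀ g : G, Isometry fun x : X => g • x)
    (hgeo : ∀ x y : X, ∃ f : ℝ → X, f 0 = x ∧ f (dist x y) = y ∧
      ∀ s t : ℝ, s ∈ Set.Icc 0 (dist x y) → t ∈ Set.Icc 0 (dist x y) →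
        dist (f s) (f t) = |s - t|)
    (δ : ℝ)
    (hδ : ∀ x y z w : X, min (gp x y w) (gp x w z) - δ ≤ gp x y z)
    (x₀ : X)
    -- the orbit `G•x₀` is quasi-convex
    (hqc : ∃ c : ℝ, 0 ≤ c ∧ ∀ g h : G, ∃ (n : ℕ) (p : Fin (n + 1) → X),
      p 0 = g • x₀ ∧ p (Fin.last n) = h • x₀ ∧ (∀ i, ∃ k : G, p i = k • x₀) ∧
      (∀ i : Fin n, dist (p i.castSucc) (p i.succ) ≤ c) ∧
      (n : ℝ) ≤ c * (dist (g • x₀) (h • x₀) + 1))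
    -- the limit set is all of `∂X`: every Cauchy–Gromov sequence is equivalent to an orbit
    -- sequence
    (hfull : ∀ u : ℕ → X,
      Tendsto (fun p : ℕ × ℕ => gp x₀ (u p.1) (u p.2)) atTop atTop →
      ∃ gs : ℕ → G, Tendsto (fun n => gp x₀ (u n) (gs n • x₀)) atTop atTop) :
    ∃ R : ℝ, ∀ x : X, ∃ g : G, dist x (g • x₀) ≤ R := by
  by_contra hcon
  push_neg at hcon
  have hδ0 : 0 ≤ δ := by
    have h := hδ x₀ x₀ x₀ x₀
    simp [gp] at h
    linarith
  have hgeo' : ∀ x y : X, ∃ f, IsGeod f x y := hgeo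
  obtain ⟨c₀, hc₀0, hchain₀⟩ := hqc
  set c := max c₀ 1 with hcdef
  have hc1 : (1:ℝ) ≤ c := le_max_right _ _
  have hc0 : (0:ℝ) ≤ c := by linarith
  have hchain : ∀ g h : G, ∃ (n : ℕ) (p : Fin (n + 1) → X),
      p 0 = g • x₀ ∧ p (Fin.last n) = h • x₀ ∧ (∀ i, ∃ k : G, p i = k • x₀) ∧
      (∀ i : Fin n, dist (p i.castSucc) (p i.succ) ≤ c) ∧
      (n : ℝ) ≤ c * (dist (g • x₀) (h • x₀) + 1) := by
    intro g h
    obtain ⟨n, p, h1, h2, h3, h4, h5⟩ := hchain₀ g h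
    exact ⟨n, p, h1, h2, h3, fun i => (h4 i).trans (le_max_left _ _),
      h5.trans (mul_le_mul_of_nonneg_right (le_max_left _ _) (by positivity))⟩
  set S : Set X := Set.range (fun g : G => g • x₀) with hS
  have hSne : S.Nonempty := ⟨(1:G) • x₀, ⟨1, rfl⟩⟩
  have hiso' : ∀ (g : G) (a b : X), dist (g • a) (g • b) = dist a b :=
    fun g a b => (hiso g).dist_eq a b
  -- a sequence of points far from the orbit, with `x₀` nearly a closest orbit point
  have hYex : ∀ n : ℕ, ∃ yy : X, ((n:ℝ) ≤ dist x₀ yy) ∧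
      ∀ g : G, dist x₀ yy - 1 ≤ dist yy (g • x₀) := by
    intro n
    obtain ⟨x, hx⟩ := hcon n
    set E : Set ℝ := Set.range (fun g : G => dist x (g • x₀)) with hE
    have hEne : E.Nonempty := ⟨dist x ((1:G) • x₀), ⟨1, rfl⟩⟩
    have hEbd : BddBelow E := ⟨0, by rintro r ⟨g, rfl⟩; exact dist_nonneg⟩
    have hDle : ∀ g : G, sInf E ≤ dist x (g • x₀) := fun g => csInf_le hEbd ⟨g, rfl⟩
    have hDge : (n:ℝ) ≤ sInf E := le_csInf hEne (by rintro r ⟨g, rfl⟩; exact (hx g).le)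
    obtain ⟨r, ⟨g₀, hg₀⟩, hr⟩ := exists_lt_of_csInf_lt hEne
      (show sInf E < sInf E + 1 by linarith)
    refine ⟨g₀⁻¹ • x, ?_, ?_⟩
    · have e : dist x₀ (g₀⁻¹ • x) = dist x (g₀ • x₀) := by
        rw [← hiso' g₀ x₀ (g₀⁻¹ • x), smul_inv_smul, dist_comm]
      rw [e]
      exact le_trans hDge (hDle g₀)
    · intro g
      have e1 : dist x₀ (g₀⁻¹ • x) = dist x (g₀ • x₀) := by
        rw [← hiso' g₀ x₀ (g₀⁻¹ • x), smul_inv_smul, dist_comm]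
      have e2 : dist (g₀⁻¹ • x) (g • x₀) = dist x ((g₀ * g) • x₀) := by
        rw [← hiso' g₀ (g₀⁻¹ • x) (g • x₀), smul_inv_smul, smul_smul]
      rw [e1, e2]
      have := hDle (g₀ * g)
      have hg₀' : dist x (g₀ • x₀) = r := hg₀
      linarith
  choose y hy1 hy2 using hYex
  choose F hF using fun n => hgeo' x₀ (y n)
  set d : ℕ → ℝ := fun n => dist x₀ (y n) with hd
  have hdge : ∀ n : ℕ, (n:ℝ) ≤ d n := hy1
  have hd0 : ∀ n, 0 ≤ d n := fun n => dist_nonneg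
  set v : ℕ → ℕ → X := fun n k => F n (min (k:ℝ) (d n)) with hv
  have hvmem : ∀ n k : ℕ, min ((k:ℝ)) (d n) ∈ Set.Icc 0 (d n) :=
    fun n k => ⟨le_min (Nat.cast_nonneg k) (hd0 n), min_le_right _ _⟩
  have hvdist : ∀ n k, dist x₀ (v n k) = min (k:ℝ) (d n) :=
    fun n k => (hF n).dist_from (hvmem n k)
  have hvd2 : ∀ n j k : ℕ, j ≤ n → k ≤ n → dist (v n j) (v n k) = |(j:ℝ) - k| := by
    intro n j k hj hk
    have ej : min ((j:ℝ)) (d n) = (j:ℝ) :=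
      min_eq_left (le_trans (Nat.cast_le.2 hj) (hdge n))
    have ek : min ((k:ℝ)) (d n) = (k:ℝ) :=
      min_eq_left (le_trans (Nat.cast_le.2 hk) (hdge n))
    show dist (F n _) (F n _) = _
    rw [(hF n).2.2 _ _ (hvmem n j) (hvmem n k), ej, ek]
  have hvfar : ∀ n k : ℕ, k ≤ n → ∀ g : G, (k:ℝ) - 1 ≤ dist (v n k) (g • x₀) := by
    intro n k hk g
    have ek : min ((k:ℝ)) (d n) = (k:ℝ) :=
      min_eq_left (le_trans (Nat.cast_le.2 hk) (hdge n))
    have h1 : dist (y n) (v n k) = d n - k := by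
      rw [dist_comm]
      have h := (hF n).dist_to (hvmem n k)
      rw [h, ek]
    have h2 := hy2 n g
    have h3 := dist_triangle (y n) (v n k) (g • x₀)
    linarith
  -- extract a convergent subsequence in the product of closed balls
  set 𝒮 : Set (ℕ → X) := Set.pi Set.univ (fun k => Metric.closedBall x₀ (k:ℝ)) with h𝒮def
  have h𝒮 : IsCompact 𝒮 := isCompact_univ_pi fun k => isCompact_closedBall x₀ _
  have hmem : ∀ n, v n ∈ 𝒮 := by
    intro n
    rw [Set.mem_univ_pi]
    intro k
    rw [Metric.mem_closedBall, dist_comm, hvdist]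
    exact min_le_left _ _
  obtain ⟨u, -, φ, hφ, hconv⟩ := h𝒮.isSeqCompact hmem
  have hk : ∀ k, Tendsto (fun i => v (φ i) k) atTop (𝓝 (u k)) :=
    fun k => tendsto_pi_nhds.1 hconv k
  have hu0 : u 0 = x₀ := by
    have hval : ∀ i : ℕ, v (φ i) 0 = x₀ := by
      intro i
      show F (φ i) (min ((0:ℕ):ℝ) (d (φ i))) = x₀
      rw [Nat.cast_zero, min_eq_left (hd0 (φ i))]
      exact (hF (φ i)).1
    refine tendsto_nhds_unique (hk 0) ?_
    simp only [hval]
    exact tendsto_const_nhds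
  have hud : ∀ j k : ℕ, dist (u j) (u k) = |(j:ℝ) - (k:ℝ)| := by
    intro j k
    have ev : ∀ᶠ i in atTop, dist (v (φ i) j) (v (φ i) k) = |(j:ℝ) - k| := by
      filter_upwards [eventually_ge_atTop (max j k)] with i hi
      exact hvd2 (φ i) j k (le_trans (le_max_left _ _) (le_trans hi hφ.le_apply))
        (le_trans (le_max_right _ _) (le_trans hi hφ.le_apply))
    exact tendsto_nhds_unique ((hk j).dist (hk k))
      (Tendsto.congr' (ev.mono fun i h => h.symm) tendsto_const_nhds)
  have hux : ∀ k : ℕ, dist x₀ (u k) = (k:ℝ) := by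
    intro k
    have := hud 0 k
    rw [hu0] at this
    rw [this, Nat.cast_zero, zero_sub, abs_neg, abs_of_nonneg (Nat.cast_nonneg k)]
  have hufar : ∀ (k : ℕ) (g : G), (k:ℝ) - 1 ≤ dist (u k) (g • x₀) := by
    intro k g
    refine ge_of_tendsto ((hk k).dist tendsto_const_nhds) ?_
    filter_upwards [eventually_ge_atTop k] with i hi
    exact hvfar (φ i) k (hi.trans hφ.le_apply) g
  have hugp : ∀ j k : ℕ, gp x₀ (u j) (u k) = min (j:ℝ) (k:ℝ) := by
    intro j k
    simp only [gp, hux j, hux k, hud j k]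
    rcases le_total (j:ℝ) (k:ℝ) with h | h
    · rw [abs_of_nonpos (by linarith), min_eq_left h]; ring
    · rw [abs_of_nonneg (by linarith), min_eq_right h]; ring
  have hCauchy : Tendsto (fun p : ℕ × ℕ => gp x₀ (u p.1) (u p.2)) atTop atTop := by
    rw [tendsto_atTop]
    intro b
    obtain ⟨N, hN⟩ := exists_nat_ge b
    filter_upwards [eventually_ge_atTop (N, N)] with p hp
    rw [hugp]
    exact le_trans hN (le_min (Nat.cast_le.2 hp.1) (Nat.cast_le.2 hp.2))
  obtain ⟨gs, hgs⟩ := hfull u hCauchy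
  set A : ℝ := 2 + 6*c with hA
  set B : ℝ := 4 + 3*c with hB
  have hApos : (0:ℝ) < A := by rw [hA]; linarith
  have hBpos : (0:ℝ) < B := by rw [hB]; linarith
  have key : ∀ s k : ℕ, (s:ℝ) ≤ (k:ℝ) → (s:ℝ) ≤ gp x₀ (u k) (gs k • x₀) →
      ∃ D : ℝ, ((s:ℝ) - 1 - 4*δ ≤ D) ∧
        D - 1 ≤ 4*δ*(Real.logb 2 (A*D+B+2) + 1) + c := by
    intro s k hsk hsgp
    set z : X := gs k • x₀ with hz
    have hTz : gp x₀ (u k) z ≤ dist x₀ z := gp_le_right _ _ _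
    have hsz : (s:ℝ) ≤ dist x₀ z := le_trans hsgp hTz
    obtain ⟨f, hf⟩ := hgeo' x₀ z
    have hsIcc : (s:ℝ) ∈ Set.Icc 0 (dist x₀ z) := ⟨Nat.cast_nonneg s, hsz⟩
    have step1 : dist (f s) (u s) ≤ 4*δ := by
      have k4 := gp_four hδ0 hδ x₀ (f s) z (u k) (u s)
      have e1 : gp x₀ (f s) z = s := hf.gp_eq hsIcc
      have e2 : gp x₀ z (u k) = gp x₀ (u k) z := gp_comm _ _ _
      have e3 : gp x₀ (u k) (u s) = s := by
        rw [hugp]; exact min_eq_right hsk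
      have emin : (s:ℝ) ≤ min (gp x₀ (f s) z) (min (gp x₀ z (u k)) (gp x₀ (u k) (u s))) :=
        le_min e1.symm.le (le_min (by rw [e2]; exact hsgp) e3.symm.le)
      have hgpls : (s:ℝ) - 2*δ ≤ gp x₀ (f s) (u s) := by linarith
      have e4 : dist x₀ (f s) = s := hf.dist_from hsIcc
      have e5 : dist x₀ (u s) = s := hux s
      simp only [gp, e4, e5] at hgpls
      linarith
    have step2 : ∀ g : G, (s:ℝ) - 1 - 4*δ ≤ dist (f s) (g • x₀) := by
      intro g
      have h3 := dist_triangle (u s) (f s) (g • x₀)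
      have h1 := hufar s g
      rw [dist_comm (u s) (f s)] at h3
      linarith
    set Φ : ℝ → ℝ := fun t => Metric.infDist (f t) S with hΦ
    have hfc : ContinuousOn f (Set.Icc 0 (dist x₀ z)) := by
      apply LipschitzOnWith.continuousOn (K := 1)
      apply LipschitzOnWith.of_dist_le_mul
      intro a ha b hb
      rw [hf.2.2 a b ha hb, Real.dist_eq]
      simp
    have hΦc : ContinuousOn Φ (Set.Icc 0 (dist x₀ z)) :=
      (Metric.continuous_infDist_pt S).comp_continuousOn hfc
    obtain ⟨t₀, ht₀mem, ht₀max⟩ := isCompact_Icc.exists_isMaxOn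
      (Set.nonempty_Icc.2 dist_nonneg) hΦc
    set D := Φ t₀ with hDdef
    set m := f t₀ with hm
    have hD0 : 0 ≤ D := Metric.infDist_nonneg
    have hDlb : (s:ℝ) - 1 - 4*δ ≤ D := by
      have h1 : (s:ℝ) - 1 - 4*δ ≤ Φ s := by
        apply le_of_not_gt
        intro hlt
        obtain ⟨yy, hyy, hdy⟩ := (Metric.infDist_lt_iff hSne).1 hlt
        obtain ⟨g, rfl⟩ := hyy
        exact absurd hdy (not_lt.2 (step2 g))
      exact le_trans h1 (ht₀max hsIcc)
    have hDorb : ∀ g : G, D ≤ dist m (g • x₀) :=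
      fun g => Metric.infDist_le_dist_of_mem ⟨g, rfl⟩
    have hDt₀ : D ≤ t₀ := by
      have h1 := hDorb 1
      rw [one_smul] at h1
      have e := hf.dist_from ht₀mem
      rw [dist_comm] at h1
      rw [e] at h1
      exact h1
    have hDt₀' : D ≤ dist x₀ z - t₀ := by
      have h1 := hDorb (gs k)
      have e := hf.dist_to ht₀mem
      rw [← hz] at h1
      rw [e] at h1
      exact h1
    set tl := max 0 (t₀ - 2*D) with htldef
    set tr := min (dist x₀ z) (t₀ + 2*D) with htrdef
    have htlmem : tl ∈ Set.Icc 0 (dist x₀ z) :=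
      ⟨le_max_left _ _, max_le dist_nonneg (by linarith [ht₀mem.2])⟩
    have htrmem : tr ∈ Set.Icc 0 (dist x₀ z) :=
      ⟨le_min dist_nonneg (by linarith [ht₀mem.1]), min_le_left _ _⟩
    have htlt₀ : tl ≤ t₀ := max_le ht₀mem.1 (by linarith)
    have ht₀tr : t₀ ≤ tr := le_min ht₀mem.2 (by linarith)
    have hspan : tr - tl ≤ 4*D := by
      have h1 : t₀ - 2*D ≤ tl := le_max_right _ _
      have h2 : tr ≤ t₀ + 2*D := min_le_right _ _
      linarith
    -- left chain from `f tl` to an orbit point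
    have left : ∃ (N₁ : ℕ) (σ₁ : ℕ → X) (ga : G), σ₁ 0 = f tl ∧ σ₁ N₁ = ga • x₀ ∧
        (∀ i, i < N₁ → dist (σ₁ i) (σ₁ (i+1)) ≤ c) ∧
        (∀ i, i ≤ N₁ → D - 1 ≤ dist m (σ₁ i)) ∧ (N₁:ℝ) ≤ D + 2 ∧
        dist (f tl) (ga • x₀) ≤ D + 1 := by
      rcases le_or_gt (t₀ - 2*D) 0 with hcase | hcase
      · have htl0 : tl = 0 := max_eq_left (by linarith)
        have hfx : f tl = x₀ := by rw [htl0]; exact hf.1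
        refine ⟨0, fun _ => x₀, 1, hfx.symm, by simp, fun i hi => absurd hi (by omega),
          ?_, by push_cast; linarith, by rw [hfx, one_smul, dist_self]; linarith⟩
        intro i _
        show D - 1 ≤ dist m x₀
        have e := hf.dist_from ht₀mem
        rw [dist_comm x₀ m] at e
        rw [e]
        linarith
      · have htleq : tl = t₀ - 2*D := max_eq_right (by linarith)
        have hΦtl : Φ tl ≤ D := ht₀max htlmem
        obtain ⟨a', ha'S, ha'd⟩ := (Metric.infDist_lt_iff hSne).1
          (lt_of_le_of_lt hΦtl (by linarith : D < D + 1))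
        obtain ⟨ga, rfl⟩ := ha'S
        obtain ⟨f₁, hf₁⟩ := hgeo' (f tl) (ga • x₀)
        obtain ⟨N₁, σ₁, hσ0, hσN, hNle, hstep, hpts⟩ := discretize hc1 hf₁
        refine ⟨N₁, σ₁, ga, hσ0, hσN, hstep, ?_, by linarith, ha'd.le⟩
        intro i hi
        have h1 := (hpts i hi).1
        have h2 : dist m (f tl) = 2*D := by
          rw [hf.2.2 t₀ tl ht₀mem htlmem, htleq, abs_of_nonneg (by linarith)]
          ring
        have h3 := dist_triangle m (σ₁ i) (f tl)
        rw [dist_comm (σ₁ i) (f tl)] at h3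
        linarith
    -- right chain from an orbit point to `f tr`
    have right : ∃ (N₃ : ℕ) (σ₃ : ℕ → X) (gb : G), σ₃ 0 = gb • x₀ ∧ σ₃ N₃ = f tr ∧
        (∀ i, i < N₃ → dist (σ₃ i) (σ₃ (i+1)) ≤ c) ∧
        (∀ i, i ≤ N₃ → D - 1 ≤ dist m (σ₃ i)) ∧ (N₃:ℝ) ≤ D + 2 ∧
        dist (gb • x₀) (f tr) ≤ D + 1 := by
      rcases le_or_gt (dist x₀ z) (t₀ + 2*D) with hcase | hcase
      · have htr0 : tr = dist x₀ z := min_eq_left hcase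
        have hfx : f tr = z := by rw [htr0]; exact hf.2.1
        refine ⟨0, fun _ => z, gs k, by rw [hz], hfx.symm, fun i hi => absurd hi (by omega),
          ?_, by push_cast; linarith, by rw [hfx, ← hz, dist_self]; linarith⟩
        intro i _
        show D - 1 ≤ dist m z
        have e := hf.dist_to ht₀mem
        rw [e]
        linarith
      · have htreq : tr = t₀ + 2*D := min_eq_right (by linarith)
        have hΦtr : Φ tr ≤ D := ht₀max htrmem
        obtain ⟨b', hb'S, hb'd⟩ := (Metric.infDist_lt_iff hSne).1
          (lt_of_le_of_lt hΦtr (by linarith : D < D + 1))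
        obtain ⟨gb, rfl⟩ := hb'S
        obtain ⟨f₃, hf₃⟩ := hgeo' (gb • x₀) (f tr)
        obtain ⟨N₃, σ₃, hσ0, hσN, hNle, hstep, hpts⟩ := discretize hc1 hf₃
        have hdb : dist (gb • x₀) (f tr) ≤ D + 1 := by
          rw [dist_comm]; exact hb'd.le
        refine ⟨N₃, σ₃, gb, hσ0, hσN, hstep, ?_, by linarith, hdb⟩
        intro i hi
        have h1 := (hpts i hi).2
        have h2 : dist m (f tr) = 2*D := by
          rw [hf.2.2 t₀ tr ht₀mem htrmem, htreq, abs_of_nonpos (by linarith)]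
          ring
        have h4 := dist_triangle m (σ₃ i) (f tr)
        linarith
    obtain ⟨N₁, σ₁, ga, hσ₁0, hσ₁N, hσ₁step, hσ₁far, hN₁le, hga⟩ := left
    obtain ⟨N₃, σ₃, gb, hσ₃0, hσ₃N, hσ₃step, hσ₃far, hN₃le, hgb⟩ := right
    -- middle chain: the quasiconvexity chain between the two orbit points
    obtain ⟨n₂, pfin, hp0, hpl, hporb, hpstep, hpcount⟩ := hchain ga gb
    have hmidx : ∀ i : ℕ, min i n₂ < n₂ + 1 := by omega
    set σ₂ : ℕ → X := fun i => pfin ⟨min i n₂, hmidx i⟩ with hσ₂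
    have hσ₂0 : σ₂ 0 = ga • x₀ := by
      have : (⟨min 0 n₂, hmidx 0⟩ : Fin (n₂+1)) = 0 := by
        ext; simp
      rw [hσ₂]; simp only [this]; exact hp0
    have hσ₂n : σ₂ n₂ = gb • x₀ := by
      have : (⟨min n₂ n₂, hmidx n₂⟩ : Fin (n₂+1)) = Fin.last n₂ := by
        ext; simp
      rw [hσ₂]; simp only [this]; exact hpl
    have hσ₂step : ∀ i, i < n₂ → dist (σ₂ i) (σ₂ (i+1)) ≤ c := by
      intro i hi
      have hstep := hpstep ⟨i, hi⟩
      have e1 : (⟨min i n₂, hmidx i⟩ : Fin (n₂+1)) = (⟨i, hi⟩ : Fin n₂).castSucc := by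
        ext; simp; omega
      have e2 : (⟨min (i+1) n₂, hmidx (i+1)⟩ : Fin (n₂+1)) = (⟨i, hi⟩ : Fin n₂).succ := by
        ext; simp; omega
      rw [hσ₂]; simp only [e1, e2]; exact hstep
    have hσ₂far : ∀ i, i ≤ n₂ → D - 1 ≤ dist m (σ₂ i) := by
      intro i _
      obtain ⟨g', hg'⟩ := hporb ⟨min i n₂, hmidx i⟩
      rw [hσ₂]; simp only [hg']
      linarith [hDorb g']
    have hσ₂cnt : (n₂:ℝ) ≤ c * (6*D + 3) := by
      refine hpcount.trans ?_
      have h1 := dist_triangle (ga • x₀) (f tl) (f tr)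
      have h2 := dist_triangle (ga • x₀) (f tr) (gb • x₀)
      have h3 : dist (f tl) (f tr) = tr - tl := by
        rw [hf.2.2 tl tr htlmem htrmem, abs_of_nonpos (by linarith)]
        ring
      have h4 : dist (ga • x₀) (f tl) = dist (f tl) (ga • x₀) := dist_comm _ _
      have h5 : dist (f tr) (gb • x₀) ≤ D + 1 := by rw [dist_comm]; exact hgb
      have hab : dist (ga • x₀) (gb • x₀) ≤ 6*D + 2 := by linarith
      nlinarith
    -- concatenate the three chains
    obtain ⟨τ₁, hτ₁0, hτ₁n, hτ₁step, hτ₁P⟩ :=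
      chain_append (P := fun x => D - 1 ≤ dist m x) (by rw [hσ₁N, hσ₂0])
        hσ₁step hσ₂step hσ₁far hσ₂far
    obtain ⟨τ, hτ0, hτn, hτstep, hτP⟩ :=
      chain_append (P := fun x => D - 1 ≤ dist m x) (by rw [hτ₁n, hσ₂n, hσ₃0])
        hτ₁step hσ₃step hτ₁P hσ₃far
    set nT := N₁ + n₂ + N₃ with hnT
    have hdlr : dist (f tl) (f tr) = tr - tl := by
      rw [hf.2.2 tl tr htlmem htrmem, abs_of_nonpos (by linarith)]
      ring
    have hf' : IsGeod (fun r => f (tl + r)) (f tl) (f tr) := by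
      refine ⟨by simp, ?_, ?_⟩
      · show f (tl + dist (f tl) (f tr)) = f tr
        rw [hdlr]
        congr 1
        ring
      · intro s' t' hs' ht'
        rw [hdlr] at hs' ht'
        show dist (f (tl + s')) (f (tl + t')) = _
        rw [hf.2.2 (tl + s') (tl + t')
          ⟨by linarith [hs'.1, htlmem.1], by linarith [hs'.2, htrmem.2]⟩
          ⟨by linarith [ht'.1, htlmem.1], by linarith [ht'.2, htrmem.2]⟩]
        rw [show tl + s' - (tl + t') = s' - t' by ring]
    have hτends : τ 0 = f tl ∧ τ (N₁ + n₂ + N₃) = f tr := by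
      constructor
      · rw [hτ0, hτ₁0, hσ₁0]
      · rw [hτn, hσ₃N]
    have hfgeod : IsGeod (fun r => f (tl + r)) (τ 0) (τ (N₁ + n₂ + N₃)) := by
      rw [hτends.1, hτends.2]; exact hf'
    have htmem : t₀ - tl ∈ Set.Icc 0 (dist (τ 0) (τ (N₁ + n₂ + N₃))) := by
      rw [hτends.1, hτends.2, hdlr]
      exact ⟨by linarith, by linarith⟩
    set h' := Nat.clog 2 (nT + 2) with hh'
    have hle : nT ≤ 2 ^ h' :=
      le_trans (by omega) (Nat.le_pow_clog (by norm_num) (nT+2))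
    obtain ⟨i, hi, hdi⟩ := chainL4 hδ0 hc0 hδ hgeo' h' nT hle τ
      (by rw [hnT]; exact hτstep) _ (by rw [hnT] at *; exact hfgeod)
      (t₀ - tl) (by rw [hnT] at *; exact htmem)
    have hfar := hτP i (by omega)
    have hmi : (fun r => f (tl + r)) (t₀ - tl) = m := by
      show f (tl + (t₀ - tl)) = m
      congr 1
      ring
    have hdi' : dist m (τ i) ≤ 4*δ*(h':ℝ) + c := by
      have e : tl + (t₀ - tl) = t₀ := by ring
      simpa [e] using hdi
    have main1 : D - 1 ≤ 4*δ*(h':ℝ) + c := le_trans hfar hdi' 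

    have hg1 : 0 < h' := Nat.clog_pos (by norm_num) (by omega)
    have hgp2 : 2 ^ (h' - 1) < nT + 2 :=
      Nat.pow_pred_clog_lt_self (x := nT + 2) (by norm_num) (by omega)
    have hnTR : (nT:ℝ) ≤ A*D + B := by
      rw [hnT]
      push_cast
      rw [hA, hB]
      nlinarith [hσ₂cnt, hN₁le, hN₃le]
    have hADBpos : (0:ℝ) < A*D+B+2 := by nlinarith
    have hgR : ((h' - 1 : ℕ):ℝ) ≤ Real.logb 2 (A*D+B+2) := by
      have h2g : ((2:ℝ))^((h'-1 : ℕ)) ≤ A*D + B + 2 := by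
        have hcast : ((2^(h'-1) : ℕ):ℝ) ≤ ((nT + 1 : ℕ):ℝ) := Nat.cast_le.2 (by omega)
        push_cast at hcast
        linarith
      have e1 : ((h' - 1 : ℕ):ℝ) = Real.logb 2 ((2:ℝ)^((h'-1:ℕ):ℝ)) :=
        (Real.logb_rpow (by norm_num) (by norm_num)).symm
      rw [e1, Real.rpow_natCast]
      exact (Real.logb_le_logb (by norm_num) (by positivity) hADBpos).2 h2g
    have hh'cast : (h':ℝ) = ((h' - 1 : ℕ):ℝ) + 1 := by
      have : h' = (h' - 1) + 1 := by omega
      rw [this]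
      push_cast
      ring
    refine ⟨D, hDlb, ?_⟩
    rw [hh'cast] at main1
    nlinarith [hgR, hδ0]
  -- the linear-vs-logarithmic contradiction
  have anal : ∃ M : ℝ, ∀ D : ℝ, M ≤ D →
      4*δ*(Real.logb 2 (A*D+B+2) + 1) + c < D - 1 := by
    set K := 4*δ/Real.log 2 with hK
    have hlog2 : (0:ℝ) < Real.log 2 := Real.log_pos (by norm_num)
    have hK0 : 0 ≤ K := div_nonneg (by linarith) hlog2.le
    have hε : (0:ℝ) < 1/((2*A)*(K+1)) := by positivity
    have h1 : ∀ᶠ x : ℝ in atTop, ‖Real.log x‖ ≤ (1/((2*A)*(K+1))) * ‖x‖ :=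
      Real.isLittleO_log_id_atTop.def hε
    have htend : Tendsto (fun D : ℝ => A*D+B+2) atTop atTop := by
      have h := tendsto_atTop_add_const_right atTop (B+2)
        (Tendsto.const_mul_atTop hApos (tendsto_id (α := ℝ)))
      simpa [add_assoc] using h
    have h2 := htend.eventually (h1.and (eventually_ge_atTop (1:ℝ)))
    obtain ⟨M₀, hM₀⟩ := eventually_atTop.1
      (h2.and (eventually_ge_atTop (2*(B + 4*δ + c + 4))))
    refine ⟨M₀, fun D hD => ?_⟩
    obtain ⟨⟨hlogb, hx1⟩, hDbig⟩ := hM₀ D hD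
    have hx0 : (0:ℝ) < A*D+B+2 := by linarith
    have hlogx : Real.log (A*D+B+2) ≤ (1/((2*A)*(K+1))) * (A*D+B+2) := by
      rw [Real.norm_eq_abs, Real.norm_eq_abs] at hlogb
      rw [abs_of_nonneg hx0.le] at hlogb
      exact le_trans (le_abs_self _) hlogb
    have hKlog : 4*δ*Real.logb 2 (A*D+B+2) = K * Real.log (A*D+B+2) := by
      rw [Real.logb, hK]
      ring
    have hKx : K * Real.log (A*D+B+2) ≤ (A*D+B+2)/(2*A) := by
      have e1 : K * Real.log (A*D+B+2) ≤ K * ((1/((2*A)*(K+1))) * (A*D+B+2)) :=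
        mul_le_mul_of_nonneg_left hlogx hK0
      have e2 : K * ((1/((2*A)*(K+1))) * (A*D+B+2)) ≤
          (K+1) * ((1/((2*A)*(K+1))) * (A*D+B+2)) :=
        mul_le_mul_of_nonneg_right (by linarith)
          (mul_nonneg hε.le hx0.le)
      have e3 : (K+1) * ((1/((2*A)*(K+1))) * (A*D+B+2)) = (A*D+B+2)/(2*A) := by
        have hK1 : K + 1 ≠ 0 := by linarith
        have hA' : A ≠ 0 := ne_of_gt hApos
        field_simp
      linarith
    have hfin : 4*δ*Real.logb 2 (A*D+B+2) ≤ (A*D+B+2)/(2*A) := by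
      rw [hKlog]; exact hKx
    have hxval : (A*D+B+2)/(2*A) = D/2 + (B+2)/(2*A) := by
      have hA' : A ≠ 0 := ne_of_gt hApos
      field_simp
      ring
    have hBA : (B+2)/(2*A) ≤ B + 2 := by
      apply div_le_self (by linarith)
      rw [hA]
      linarith
    nlinarith
  obtain ⟨M, hM⟩ := anal
  obtain ⟨s, hs⟩ := exists_nat_ge (M + 2 + 4*δ)
  obtain ⟨k, hk1, hk2⟩ :=
    ((hgs.eventually_ge_atTop (s:ℝ)).and (eventually_ge_atTop s)).exists
  obtain ⟨D, hD1, hD2⟩ := key s k (Nat.cast_le.2 hk2) hk1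
  have hDM : M ≤ D := by linarith
  exact absurd hD2 (not_le.2 (by linarith [hM D hDM]))
end

section
/- Let G be a locally compact group acting continuously by isometries on a hyperbolic space X and fixing ξ ∈ ∂X, and let h be a horokernel based at ξ. Then for any x ∈ X, the function g ↦ h(x, gx) on the stabilizer G_ξ is a quasicharacter: the defect |h(x, g₁g₂x) − h(x, g₁x) − h(x, g₂x)| is bounded by a constant depending only on the hyperbolicity constant of X. -/
open Filter

private lemma gp_le_dist {X : Type*} [MetricSpace X] (x z v : X) : gp x z v ≤ dist x z := by
  have := dist_triangle x z v
  simp only [gp]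
  linarith

private lemma gp_base_change {X : Type*} [MetricSpace X] (x₀ x a b : X) :
    gp x₀ a b - dist x₀ x ≤ gp x a b := by
  have h1 := dist_triangle x₀ x a
  have h2 := dist_triangle x₀ x b
  simp only [gp]
  linarith

/-- Let `G` act continuously by isometries on a `δ`-hyperbolic space `X` fixing `ξ ∈ ∂X`,
and let `h` be a horokernel based at `ξ`.  Then for any `x`, the function
`g ↦ h(x, g x)` on the stabilizer is a quasicharacter: its defect is bounded by a constant
depending only on the hyperbolicity constant.  (Here `ξ` is represented by a Cauchy–Gromov
sequence `u`, `h` is a pointwise limit of `d(·,uₙ) - d(·,uₙ)`, and every `g ∈ G` fixes `ξ`.) -/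
theorem stmt_13 {X G : Type*} [MetricSpace X] [Group G] [MulAction G X]
    (hiso : ∀ g : G, Isometry fun x : X => g • x)
    (δ : ℝ)
    (hδ : ∀ x y z w : X, min (gp x y w) (gp x w z) - δ ≤ gp x y z)
    (x₀ : X) :
    ∃ C : ℝ, ∀ (u : ℕ → X) (h : X → X → ℝ),
      -- `u` is a Cauchy–Gromov sequence representing `ξ`
      Tendsto (fun p : ℕ × ℕ => gp x₀ (u p.1) (u p.2)) atTop atTop →
      -- `h` is a horokernel based at `ξ`
      (∀ x y : X, Tendsto (fun n => dist x (u n) - dist y (u n)) atTop (nhds (h x y))) →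
      -- every element of `G` fixes `ξ`
      (∀ g : G, Tendsto (fun n => gp x₀ (u n) (g • u n)) atTop atTop) →
      ∀ (g₁ g₂ : G) (x : X),
        |h x ((g₁ * g₂) • x) - h x (g₁ • x) - h x (g₂ • x)| ≤ C := by
  refine ⟨2 * |δ|, fun u h _ hh hfix g₁ g₂ x => ?_⟩
  set v : ℕ → X := fun n => g₁⁻¹ • u n with hv
  set z : X := g₂ • x with hz
  -- distance identities via the isometry
  have d1 : ∀ n, dist (g₁ • x) (u n) = dist x (v n) := by
    intro n
    have := (hiso g₁).dist_eq x (v n)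
    simp only [hv] at this ⊢
    rw [← this, smul_inv_smul]
  have d2 : ∀ n, dist ((g₁ * g₂) • x) (u n) = dist z (v n) := by
    intro n
    have := (hiso g₁).dist_eq z (v n)
    simp only [hv, hz] at this ⊢
    rw [mul_smul, ← this, smul_inv_smul]
  -- the defect is the limit of fₙ = 2 gp x z (v n) - 2 gp x z (u n)
  have hlim : Tendsto (fun n => 2 * gp x z (v n) - 2 * gp x z (u n)) atTop
      (nhds (h x ((g₁ * g₂) • x) - h x (g₁ • x) - h x (g₂ • x))) := by
    have := ((hh x ((g₁ * g₂) • x)).sub (hh x (g₁ • x))).sub (hh x (g₂ • x))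
    refine this.congr fun n => ?_
    have e1 := d1 n
    have e2 := d2 n
    simp only [gp]
    rw [← e1, ← e2]
    ring
  -- eventually the Gromov product gp x (u n) (v n) is large
  have htend : Tendsto (fun n => gp x (u n) (v n)) atTop atTop := by
    have h0 := hfix g₁⁻¹
    have : Tendsto (fun n => gp x₀ (u n) (v n) - dist x₀ x) atTop atTop :=
      (h0.atTop_add tendsto_const_nhds : _)
    exact tendsto_atTop_mono (fun n => gp_base_change x₀ x (u n) (v n)) this
  have hev : ∀ᶠ n in atTop, |2 * gp x z (v n) - 2 * gp x z (u n)| ≤ 2 * |δ| := by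
    filter_upwards [htend.eventually_ge_atTop (dist x z)] with n hn
    have hsymm : gp x (v n) (u n) = gp x (u n) (v n) := by
      simp only [gp, dist_comm]; ring
    -- gp x z (u n) ≥ gp x z (v n) - δ
    have h1 := hδ x z (u n) (v n)
    have h2 := hδ x z (v n) (u n)
    have b1 : gp x z (v n) ≤ dist x z := gp_le_dist x z (v n)
    have b2 : gp x z (u n) ≤ dist x z := gp_le_dist x z (u n)
    have m1 : min (gp x z (v n)) (gp x (v n) (u n)) = gp x z (v n) := by
      rw [min_eq_left]; rw [hsymm]; linarith
    have m2 : min (gp x z (u n)) (gp x (u n) (v n)) = gp x z (u n) := by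
      rw [min_eq_left]; linarith
    rw [m1] at h1
    rw [m2] at h2
    rw [abs_le]
    have hd : δ ≤ |δ| := le_abs_self δ
    constructor <;> nlinarith [abs_nonneg δ]
  calc |h x ((g₁ * g₂) • x) - h x (g₁ • x) - h x (g₂ • x)| ≤ 2 * |δ| :=
    le_of_tendsto hlim.abs hev
end

section
/- Let H be a connected-by-compact locally compact group, Λ ∈ {ℤ, ℝ}, and G = H ⋊ Λ a semidirect product, with (αₜ) the Λ-action on H. If α_t is a compaction for some t > 0, then α_t is a compaction for every t > 0. Moreover, conjugating a compaction of H by an inner automorphism of H yields again a compaction, provided H has no nontrivial compact normal subgroup and splits as M ⋊ K with K compact as in the structure theory. -/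
open scoped Pointwise

set_option linter.unusedSectionVars false
set_option maxHeartbeats 1000000
namespace Stmt18Aux

variable {H : Type*} [Group H] [TopologicalSpace H] [IsTopologicalGroup H]

lemma iter_one (β : MulAut H) (n : ℕ) : (⇑β)^[n] (1:H) = 1 := by
  induction n with
  | zero => rfl
  | succ n ih => rw [Function.iterate_succ_apply', ih, map_one]

lemma iter_mul (β : MulAut H) (n : ℕ) (a b : H) :
    (⇑β)^[n] (a*b) = (⇑β)^[n] a * (⇑β)^[n] b := by
  induction n with
  | zero => rfl
  | succ n ih => rw [Function.iterate_succ_apply', Function.iterate_succ_apply',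
      Function.iterate_succ_apply', ih, map_mul]

lemma iter_inv (β : MulAut H) (n : ℕ) (a : H) :
    (⇑β)^[n] a⁻¹ = ((⇑β)^[n] a)⁻¹ := by
  induction n with
  | zero => rfl
  | succ n ih => rw [Function.iterate_succ_apply', Function.iterate_succ_apply', ih, map_inv]

/-- The cocycle `Zf β u n = u · β(u) · β²(u) ⋯ βⁿ⁻¹(u)`. -/
def Zf (β : MulAut H) (u : H) : ℕ → H
  | 0 => 1
  | n+1 => u * β (Zf β u n)

lemma Zf_succ' (β : MulAut H) (u : H) (n : ℕ) :
    Zf β u (n+1) = Zf β u n * (⇑β)^[n] u := by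
  induction n with
  | zero => simp [Zf]
  | succ n ih =>
      calc Zf β u (n+1+1) = u * β (Zf β u (n+1)) := rfl
        _ = u * (β (Zf β u n) * β ((⇑β)^[n] u)) := by rw [ih, map_mul]
        _ = (u * β (Zf β u n)) * (⇑β)^[n+1] u := by
              rw [Function.iterate_succ_apply' (⇑β) n u]; group
        _ = Zf β u (n+1) * (⇑β)^[n+1] u := rfl

lemma Zf_add (β : MulAut H) (u : H) (a b : ℕ) :
    Zf β u (a+b) = Zf β u a * (⇑β)^[a] (Zf β u b) := by
  induction b with
  | zero => simp [Zf, iter_one]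
  | succ b ih =>
      rw [← Nat.add_assoc, Zf_succ', ih, Zf_succ', iter_mul, mul_assoc,
        ← Function.iterate_add_apply]

lemma Zf_shift (β : MulAut H) (u : H) (a b : ℕ) :
    (⇑β)^[a] (Zf β u b) = Zf β ((⇑β)^[a] u) b := by
  induction b with
  | zero => simpa [Zf] using iter_one β a
  | succ b ih =>
      rw [show Zf β u (b+1) = u * β (Zf β u b) from rfl, iter_mul,
        show Zf β ((⇑β)^[a] u) (b+1) = (⇑β)^[a] u * β (Zf β ((⇑β)^[a] u) b) from rfl, ← ih]
      congr 1
      rw [← Function.iterate_succ_apply (⇑β) a (Zf β u b),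
        Function.iterate_succ_apply' (⇑β) a (Zf β u b)]

lemma conj_iter (β : MulAut H) (y : H) (n : ℕ) (h : H) :
    (fun h => y * β h * y⁻¹)^[n] h = Zf β y n * (⇑β)^[n] h * (Zf β y n)⁻¹ := by
  induction n with
  | zero => simp [Zf]
  | succ n ih =>
      rw [Function.iterate_succ_apply', ih]
      simp only [map_mul, map_inv, Function.iterate_succ_apply' (⇑β) n h]
      rw [show Zf β y (n+1) = y * β (Zf β y n) from rfl]
      group

lemma Zf_cont (β : MulAut H) (hc : Continuous ⇑β) (m : ℕ) :
    Continuous fun u => Zf β u m := by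
  induction m with
  | zero => simpa [Zf] using continuous_const
  | succ m ih => exact continuous_id.mul (hc.comp ih)


theorem compacting_conj {H : Type*} [Group H] [TopologicalSpace H] [IsTopologicalGroup H]
    [LocallyCompactSpace H] [T2Space H]
    (β : MulAut H) (hc : Continuous ⇑β) (hcf : CompactingFun ⇑β) (y : H) :
    CompactingFun (fun h => y * β h * y⁻¹) := by
  classical
  obtain ⟨V, hVc, hVab⟩ := hcf
  -- enlarge the vacuum set so that it contains 1
  set V0 : Set H := V ∪ {1} with hV0def
  have hV0c : IsCompact V0 := hVc.union isCompact_singleton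
  have hab0 : ∀ g : H, ∃ N : ℕ, ∀ n : ℕ, N < n → (⇑β)^[n] g ∈ V0 :=
    fun g => (hVab g).imp fun N h n hn => Or.inl (h n hn)
  obtain ⟨V₁, hV₁c, hV₁i⟩ := exists_compact_superset hV0c
  have hV0V₁ : V0 ⊆ V₁ := hV₁i.trans interior_subset
  have h1V₁ : (1:H) ∈ V₁ := hV0V₁ (Or.inr rfl)
  have hciter : ∀ n : ℕ, Continuous ((⇑β)^[n]) := fun n => hc.iterate n
  -- every compact set is sent into `interior V₁` within a uniformly bounded first time
  have key : ∀ C : Set H, IsCompact C →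
      ∃ R : ℕ, ∀ x ∈ C, ∃ n : ℕ, 1 ≤ n ∧ n ≤ R ∧ (⇑β)^[n] x ∈ interior V₁ := by
    intro C hC
    have hcov : C ⊆ ⋃ n : ℕ, (⇑β)^[n+1] ⁻¹' interior V₁ := by
      intro x hx
      obtain ⟨N, hN⟩ := hab0 x
      exact Set.mem_iUnion.2 ⟨N, hV₁i (hN (N+1) (lt_add_one N))⟩
    obtain ⟨t, ht⟩ := hC.elim_finite_subcover (fun n : ℕ => (⇑β)^[n+1] ⁻¹' interior V₁)
      (fun n => (isOpen_interior).preimage (hciter (n+1))) hcov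
    refine ⟨t.sup id + 1, fun x hx => ?_⟩
    obtain ⟨n, hnt, hxn⟩ := Set.mem_iUnion₂.1 (ht hx)
    exact ⟨n+1, Nat.succ_le_succ (Nat.zero_le n),
      Nat.succ_le_succ (Finset.le_sup (f := id) hnt), hxn⟩
  obtain ⟨R, hR⟩ := key V₁ hV₁c
  -- the forward-invariant compact "absorbing" set A
  set A : Set H := ⋃ j ∈ Finset.range (R+1), (⇑β)^[j] '' V₁ with hAdef
  have hAc : IsCompact A :=
    (Finset.range (R+1)).finite_toSet.isCompact_biUnion fun j _ => hV₁c.image (hciter j)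
  have hV₁A : V₁ ⊆ A := by
    intro x hx
    have hx0 : x ∈ (⇑β)^[0] '' V₁ := ⟨x, hx, rfl⟩
    exact Set.mem_biUnion (Finset.mem_range.2 (Nat.succ_pos R)) hx0
  have h1A : (1:H) ∈ A := hV₁A h1V₁
  have hβA : ∀ x ∈ A, β x ∈ A := by
    intro x hx
    obtain ⟨j, hj, hxj⟩ := Set.mem_iUnion₂.1 hx
    obtain ⟨v, hv, rfl⟩ := hxj
    rw [Finset.mem_range] at hj
    by_cases hjR : j + 1 ≤ R
    · refine Set.mem_biUnion (Finset.mem_range.2 (Nat.lt_succ_of_le hjR)) ⟨v, hv, ?_⟩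
      rw [Function.iterate_succ_apply' (⇑β) j v]
    · obtain ⟨n, h1n, hnR, hmem⟩ := hR v hv
      refine Set.mem_biUnion (Finset.mem_range.2 (by omega : j + 1 - n < R + 1))
        ⟨(⇑β)^[n] v, interior_subset hmem, ?_⟩
      rw [← Function.iterate_add_apply (⇑β) (j+1-n) n v,
        (by omega : j + 1 - n + n = j + 1),
        ← Function.iterate_succ_apply' (⇑β) j v]
  have hAiter : ∀ n : ℕ, ∀ x ∈ A, (⇑β)^[n] x ∈ A := by
    intro n
    induction n with
    | zero => exact fun x hx => hx
    | succ n ih =>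
        intro x hx
        rw [Function.iterate_succ_apply' (⇑β) n x]
        exact hβA _ (ih x hx)
  have hAdec : ∀ m n : ℕ, m ≤ n → (⇑β)^[n] '' A ⊆ (⇑β)^[m] '' A := by
    intro m n hmn
    intro z hz
    obtain ⟨a, ha, rfl⟩ := hz
    have : (⇑β)^[n] a = (⇑β)^[m] ((⇑β)^[n-m] a) := by
      rw [← Function.iterate_add_apply, Nat.add_sub_cancel' hmn]
    exact this ▸ ⟨(⇑β)^[n-m] a, hAiter _ a ha, rfl⟩
  -- the limit set Q
  set Qset : Set H := ⋂ n : ℕ, (⇑β)^[n] '' A with hQdef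
  have hQsub : ∀ n : ℕ, Qset ⊆ (⇑β)^[n] '' A := fun n => Set.iInter_subset _ n
  have hQA : Qset ⊆ A := by
    intro q hq; simpa using hQsub 0 hq
  have hQclosed : IsClosed Qset :=
    isClosed_iInter fun n => (hAc.image (hciter n)).isClosed
  have hQc : IsCompact Qset := hAc.of_isClosed_subset hQclosed hQA
  have h1Q : (1:H) ∈ Qset :=
    Set.mem_iInter.2 fun n => ⟨1, h1A, iter_one β n⟩
  have hβQ : ∀ q ∈ Qset, β q ∈ Qset := by
    intro q hq
    refine Set.mem_iInter.2 fun n => ?_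
    obtain ⟨a, ha, rfl⟩ := hQsub (n+1) hq
    rw [← Function.iterate_succ_apply' (⇑β) (n+1) a]
    have heq2 : (⇑β)^[n+2] a = (⇑β)^[n] ((⇑β)^[2] a) :=
      Function.iterate_add_apply (⇑β) n 2 a
    exact heq2 ▸ ⟨(⇑β)^[2] a, hAiter 2 a ha, rfl⟩
  have hβQiter : ∀ m : ℕ, ∀ q ∈ Qset, (⇑β)^[m] q ∈ Qset := by
    intro m
    induction m with
    | zero => exact fun q hq => hq
    | succ m ih =>
        intro q hq
        rw [Function.iterate_succ_apply' (⇑β) m q]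
        exact hβQ _ (ih q hq)
  -- uniform attraction of A to any open neighborhood of Q
  have hU1 : ∀ O : Set H, IsOpen O → Qset ⊆ O →
      ∃ M : ℕ, ∀ m : ℕ, M ≤ m → (⇑β)^[m] '' A ⊆ O := by
    intro O hO hQO
    by_contra hcon
    push_neg at hcon
    have hne : ∀ n : ℕ, ((⇑β)^[n] '' A ∩ Oᶜ).Nonempty := by
      intro n
      obtain ⟨m, hm, hnsub⟩ := hcon n
      rw [Set.not_subset] at hnsub
      obtain ⟨z, hz, hzO⟩ := hnsub
      exact ⟨z, hAdec n m hm hz, hzO⟩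
    have hiter := IsCompact.nonempty_iInter_of_sequence_nonempty_isCompact_isClosed
      (fun n => (⇑β)^[n] '' A ∩ Oᶜ)
      (fun n => Set.inter_subset_inter (hAdec n (n+1) (Nat.le_succ n)) subset_rfl)
      hne
      ((hAc.image (hciter 0)).inter_right hO.isClosed_compl)
      (fun n => (hAc.image (hciter n)).isClosed.inter hO.isClosed_compl)
    obtain ⟨z, hz⟩ := hiter
    rw [Set.mem_iInter] at hz
    have hzQ : z ∈ Qset := Set.mem_iInter.2 fun n => (hz n).1
    exact (hz 0).2 (hQO hzQ)
  -- uniform attraction of arbitrary compact sets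
  have hU2 : ∀ C : Set H, IsCompact C → ∀ O : Set H, IsOpen O → Qset ⊆ O →
      ∃ M : ℕ, ∀ m : ℕ, M ≤ m → ∀ c ∈ C, (⇑β)^[m] c ∈ O := by
    intro C hC O hO hQO
    obtain ⟨RC, hRC⟩ := key C hC
    obtain ⟨M₁, hM₁⟩ := hU1 O hO hQO
    refine ⟨RC + M₁, fun m hm c hcC => ?_⟩
    obtain ⟨n, h1n, hnR, hmem⟩ := hRC c hcC
    have hnm : n ≤ m := le_trans (le_trans hnR (Nat.le_add_right RC M₁)) hm
    have heq : (⇑β)^[m] c = (⇑β)^[m-n] ((⇑β)^[n] c) := by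
      rw [← Function.iterate_add_apply, Nat.sub_add_cancel hnm]
    rw [heq]
    exact hM₁ (m-n) (by omega) ⟨(⇑β)^[n] c, hV₁A (interior_subset hmem), rfl⟩
  -- Q is closed under multiplication and inverses
  have hQgen : ∀ (C : Set H), IsCompact C → ∀ z : H, (∀ n : ℕ, z ∈ (⇑β)^[n] '' C) →
      z ∈ Qset := by
    intro C hC z hzmem
    by_contra hzQ
    obtain ⟨U, W, hUo, hWo, hQU, hzW, hUW⟩ :=
      SeparatedNhds.of_isCompact_isCompact hQc isCompact_singleton
        (Set.disjoint_singleton_right.2 hzQ)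
    obtain ⟨M, hM⟩ := hU2 C hC U hUo hQU
    obtain ⟨a, ha, rfl⟩ := hzmem M
    exact Set.disjoint_left.1 hUW (hM M le_rfl a ha) (hzW rfl)
  have hQmul : ∀ q ∈ Qset, ∀ q' ∈ Qset, q * q' ∈ Qset := by
    intro q hq q' hq'
    refine hQgen (A * A) (hAc.mul hAc) _ fun n => ?_
    obtain ⟨a, ha, rfl⟩ := hQsub n hq
    obtain ⟨a', ha', rfl⟩ := hQsub n hq'
    exact ⟨a * a', Set.mul_mem_mul ha ha', iter_mul β n a a'⟩
  have hQinv : ∀ q ∈ Qset, q⁻¹ ∈ Qset := by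
    intro q hq
    refine hQgen A⁻¹ hAc.inv _ fun n => ?_
    obtain ⟨a, ha, rfl⟩ := hQsub n hq
    exact ⟨a⁻¹, Set.inv_mem_inv.2 ha, iter_inv β n a⟩
  -- Zf of elements of Q stays in Q
  have hZfQ : ∀ q ∈ Qset, ∀ m : ℕ, Zf β q m ∈ Qset := by
    intro q hq m
    induction m with
    | zero => exact h1Q
    | succ m ih => exact hQmul q hq _ (hβQ _ ih)
  -- neighborhoods E₀ ⊇ E₁ ⊇ E₂
  obtain ⟨E₀, hE₀c, hE₀n⟩ := exists_compact_mem_nhds (1:H)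
  obtain ⟨E₁, hE₁o, h1E₁, hE₁mul⟩ := exists_open_nhds_one_mul_subset hE₀n
  have hE₁E₀ : E₁ ⊆ E₀ := fun e he => by
    simpa using hE₁mul (Set.mul_mem_mul he h1E₁)
  -- E₂: conjugation-by-Q control
  have hconj : ∃ E₂ : Set H, IsOpen E₂ ∧ (1:H) ∈ E₂ ∧ E₂ ⊆ E₁ ∧
      ∀ q ∈ Qset, ∀ e ∈ E₂, q⁻¹ * e * q ∈ E₁ := by
    have hψ : Continuous fun p : H × H => p.1⁻¹ * p.2 * p.1 :=
      (continuous_fst.inv.mul continuous_snd).mul continuous_fst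
    have hpre : IsOpen ((fun p : H × H => p.1⁻¹ * p.2 * p.1) ⁻¹' E₁) :=
      hE₁o.preimage hψ
    have hsub : Qset ×ˢ ({1} : Set H) ⊆ (fun p : H × H => p.1⁻¹ * p.2 * p.1) ⁻¹' E₁ := by
      rintro ⟨q, e⟩ ⟨hq, he⟩
      simp only [Set.mem_singleton_iff] at he
      subst he
      simpa using h1E₁
    obtain ⟨u, v, huo, hvo, hQu, h1v, huv⟩ :=
      generalized_tube_lemma hQc isCompact_singleton hpre hsub
    refine ⟨v ∩ E₁, hvo.inter hE₁o, ⟨h1v rfl, h1E₁⟩, Set.inter_subset_right, ?_⟩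
    intro q hq e he
    exact huv (Set.mk_mem_prod (hQu hq) he.1)
  obtain ⟨E₂, hE₂o, h1E₂, hE₂E₁, hE₂conj⟩ := hconj
  -- attraction time M for Q·E₀ into Q·E₁
  have hQE₀c : IsCompact (Qset * E₀) := hQc.mul hE₀c
  have hQE₁o : IsOpen (Qset * E₁) := hE₁o.mul_left
  have hQQE₁ : Qset ⊆ Qset * E₁ := fun q hq => ⟨q, hq, 1, h1E₁, mul_one q⟩
  obtain ⟨M₀, hM₀⟩ := hU2 (Qset * E₀) hQE₀c (Qset * E₁) hQE₁o hQQE₁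
  set M : ℕ := M₀ + 1 with hMdef
  -- the open set O' of good starting points
  set O' : Set H := ⋂ m ∈ Finset.range (M+1), (fun u => Zf β u m) ⁻¹' (Qset * E₂) with hO'def
  have hQE₂o : IsOpen (Qset * E₂) := hE₂o.mul_left
  have hO'o : IsOpen O' :=
    isOpen_biInter_finset fun m _ => hQE₂o.preimage (Zf_cont β hc m)
  have hQO' : Qset ⊆ O' := by
    intro q hq
    refine Set.mem_iInter₂.2 fun m _ => ?_
    exact ⟨Zf β q m, hZfQ q hq m, 1, h1E₂, mul_one _⟩
  -- choose T such that w := β^[T] y ∈ O'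
  obtain ⟨T, hT⟩ := hU2 {y} isCompact_singleton O' hO'o hQO'
  set w : H := (⇑β)^[T] y with hwdef
  have hwO' : w ∈ O' := hT T le_rfl y rfl
  have hwZ : ∀ m : ℕ, m ≤ M → Zf β w m ∈ Qset * E₂ := by
    intro m hm
    exact Set.mem_iInter₂.1 hwO' m (Finset.mem_range.2 (Nat.lt_succ_of_le hm))
  -- main induction: the cocycle of w stays in the compact set Q·E₀
  have main : ∀ n : ℕ, Zf β w n ∈ Qset * E₀ := by
    intro n
    induction n using Nat.strong_induction_on with
    | _ n ih =>
      by_cases hn : n ≤ M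
      · obtain ⟨q, hq, e, he, hqe⟩ := hwZ n hn
        exact ⟨q, hq, e, hE₁E₀ (hE₂E₁ he), hqe⟩
      · push_neg at hn
        have hsplit : n = M + (n - M) := by omega
        have h1 : Zf β w M ∈ Qset * E₂ := hwZ M le_rfl
        have h2 : Zf β w (n - M) ∈ Qset * E₀ := ih (n - M) (by omega)
        have h3 : (⇑β)^[M] (Zf β w (n - M)) ∈ Qset * E₁ :=
          hM₀ M (Nat.le_succ M₀) _ h2
        obtain ⟨q, hq, e, he, hqe⟩ := h1
        obtain ⟨q', hq', e', he', hq'e'⟩ := h3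
        rw [hsplit, Zf_add, ← hqe, ← hq'e']
        refine ⟨q * q', hQmul q hq q' hq', (q'⁻¹ * e * q') * e',
          hE₁mul (Set.mul_mem_mul (hE₂conj q' hq' e he) he'), by group⟩
  -- the full cocycle of y is bounded
  set Zbig : Set H := (⋃ j ∈ Finset.range (T+1), {Zf β y j}) ∪ (Zf β y T • (Qset * E₀))
    with hZbigdef
  have hZbigc : IsCompact Zbig := by
    refine IsCompact.union ?_ (hQE₀c.smul _)
    exact (Finset.range (T+1)).finite_toSet.isCompact_biUnion fun j _ => isCompact_singleton
  have hZmem : ∀ n : ℕ, Zf β y n ∈ Zbig := by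
    intro n
    by_cases hn : n ≤ T
    · exact Or.inl (Set.mem_biUnion (Finset.mem_range.2 (Nat.lt_succ_of_le hn)) rfl)
    · push_neg at hn
      have hsplit : n = T + (n - T) := by omega
      rw [hsplit, Zf_add, Zf_shift]
      exact Or.inr ⟨Zf β w (n - T), main (n - T), rfl⟩
  -- conclusion
  refine ⟨Zbig * V0 * Zbig⁻¹, (hZbigc.mul hV0c).mul hZbigc.inv, fun g => ?_⟩
  obtain ⟨N, hN⟩ := hab0 g
  refine ⟨N, fun n hn => ?_⟩
  rw [conj_iter]
  exact Set.mul_mem_mul (Set.mul_mem_mul (hZmem n) (hN n hn)) (Set.inv_mem_inv.2 (hZmem n))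

theorem compacting_real {H : Type*} [Group H] [TopologicalSpace H] [IsTopologicalGroup H]
    (α : ℝ → MulAut H) (hα : ∀ s t : ℝ, α (s + t) = α s * α t)
    (hαcont : Continuous fun p : ℝ × H => α p.1 p.2)
    (hex : ∃ t : ℝ, 0 < t ∧ CompactingFun ⇑(α t)) :
    ∀ t : ℝ, 0 < t → CompactingFun ⇑(α t) := by
  obtain ⟨t₀, ht₀, V, hVc, hV⟩ := hex
  have hα0 : α 0 = 1 := by
    have h := hα 0 0
    rw [add_zero] at h
    exact (mul_eq_left.1 h.symm)
  have hiter : ∀ (t : ℝ) (n : ℕ) (g : H), (⇑(α t))^[n] g = α (n * t) g := by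
    intro t n g
    induction n with
    | zero => simp [hα0]
    | succ n ih =>
        rw [Function.iterate_succ_apply', ih]
        have hcast : ((n+1 : ℕ) : ℝ) * t = t + (n:ℝ) * t := by push_cast; ring
        rw [hcast, hα t ((n:ℝ) * t), MulAut.mul_apply]
  have hpow : ∀ (q : ℕ) (g : H), α (t₀ * q) g = (⇑(α t₀))^[q] g := by
    intro q g
    rw [hiter t₀ q g, mul_comm]
  intro t ht
  refine ⟨(fun p : ℝ × H => α p.1 p.2) '' (Set.Icc 0 t₀ ×ˢ V),
    (isCompact_Icc.prod hVc).image hαcont, fun g => ?_⟩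
  obtain ⟨N₀, hN₀⟩ := hV g
  refine ⟨⌈(N₀+1) * t₀ / t⌉₊, fun n hn => ?_⟩
  set q : ℕ := ⌊(n * t) / t₀⌋₊ with hqdef
  have hq1 : (q:ℝ) ≤ n * t / t₀ := Nat.floor_le (by positivity)
  have hq2 : n * t / t₀ < q + 1 := Nat.lt_floor_add_one _
  have hs0 : t₀ * q ≤ n * t := by
    have := (le_div_iff₀ ht₀).1 hq1
    linarith
  have hs1 : n * t - t₀ * q ≤ t₀ := by
    have := (div_lt_iff₀ ht₀).1 hq2
    nlinarith
  have hqN : N₀ < q := by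
    have hceil : (N₀+1) * t₀ / t ≤ (⌈(N₀+1) * t₀ / t⌉₊ : ℝ) := Nat.le_ceil _
    have hcast : ((⌈(N₀+1) * t₀ / t⌉₊ : ℕ) : ℝ) ≤ (n : ℝ) := by
      exact_mod_cast hn.le
    have h1 : (N₀+1) * t₀ / t ≤ (n:ℝ) := le_trans hceil hcast
    have h2 : (N₀+1) * t₀ ≤ n * t := by
      rw [div_le_iff₀ ht] at h1
      linarith
    have h3 : ((N₀:ℝ)+1) ≤ n * t / t₀ := by
      rw [le_div_iff₀ ht₀]
      linarith
    have := Nat.le_floor (α := ℝ) (n := N₀+1) (by exact_mod_cast h3)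
    omega
  have hmem : (⇑(α t₀))^[q] g ∈ V := hN₀ q hqN
  have hval : (⇑(α t))^[n] g
      = α ((n:ℝ) * t - t₀ * q) ((⇑(α t₀))^[q] g) := by
    have h := hα ((n:ℝ) * t - t₀ * (q:ℝ)) (t₀ * (q:ℝ))
    have harg : ((n:ℝ) * t - t₀ * (q:ℝ)) + t₀ * (q:ℝ) = (n:ℝ) * t := by ring
    rw [harg] at h
    rw [hiter t n g, h, MulAut.mul_apply, hpow]
  rw [hval]
  refine Set.mem_image_of_mem _ (Set.mk_mem_prod ?_ hmem)
  exact ⟨by linarith, hs1⟩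

theorem compacting_int {H : Type*} [Group H] [TopologicalSpace H] [IsTopologicalGroup H]
    (αz : ℤ → MulAut H) (hαz : ∀ m k : ℤ, αz (m + k) = αz m * αz k)
    (hzcont : ∀ m : ℤ, Continuous ⇑(αz m))
    (hex : ∃ m : ℤ, 0 < m ∧ CompactingFun ⇑(αz m)) :
    ∀ m : ℤ, 0 < m → CompactingFun ⇑(αz m) := by
  obtain ⟨m₀, hm₀, V, hVc, hV⟩ := hex
  have hiter : ∀ (k : ℤ) (n : ℕ) (g : H), (⇑(αz k))^[n] g = αz (k * n) g := by
    intro k n g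
    induction n with
    | zero =>
        have h0 : αz 0 = 1 := by
          have h := hαz 0 0
          rw [add_zero] at h
          exact (mul_eq_left.1 h.symm)
        simp [h0]
    | succ n ih =>
        rw [Function.iterate_succ_apply', ih]
        have hcast : k * ((n+1 : ℕ) : ℤ) = k + k * (n:ℤ) := by push_cast; ring
        rw [hcast, hαz k (k * (n:ℤ)), MulAut.mul_apply]
  intro m hm
  refine ⟨⋃ j ∈ Finset.range m₀.toNat, ⇑(αz (j:ℤ)) '' V,
    (Finset.range m₀.toNat).finite_toSet.isCompact_biUnion
      (fun j _ => hVc.image (hzcont (j:ℤ))), fun g => ?_⟩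
  obtain ⟨N₀, hN₀⟩ := hV g
  refine ⟨(m₀ * (N₀ + 1)).toNat, fun n hn => ?_⟩
  set q : ℤ := (m * n) / m₀ with hqdef
  set r : ℤ := (m * n) % m₀ with hrdef
  have heq : m₀ * q + r = m * n := Int.mul_ediv_add_emod (m * n) m₀
  have hr0 : 0 ≤ r := Int.emod_nonneg _ (ne_of_gt hm₀)
  have hr1 : r < m₀ := Int.emod_lt_of_pos _ hm₀
  have hq0 : 0 ≤ q := Int.ediv_nonneg (by positivity) hm₀.le
  have hqN : N₀ < q.toNat := by
    have hmn : ((N₀:ℤ) + 1) * m₀ ≤ m * n := by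
      have h1 : m₀ * ((N₀:ℤ) + 1) ≤ (n:ℤ) := by
        have h2 : ((m₀ * ((N₀:ℤ)+1)).toNat : ℤ) = m₀ * ((N₀:ℤ)+1) :=
          Int.toNat_of_nonneg (by positivity)
        omega
      have h3 : (n:ℤ) ≤ m * n := le_mul_of_one_le_left (by positivity) hm
      nlinarith
    have := (Int.le_ediv_iff_mul_le hm₀).2 hmn
    omega
  have hmem : (⇑(αz m₀))^[q.toNat] g ∈ V := hN₀ q.toNat hqN
  have hpow : αz (m₀ * q) g = (⇑(αz m₀))^[q.toNat] g := by
    rw [hiter m₀ q.toNat g, Int.toNat_of_nonneg hq0]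
  have hval : (⇑(αz m))^[n] g = αz r ((⇑(αz m₀))^[q.toNat] g) := by
    have h := hαz r (m₀ * q)
    have harg : r + m₀ * q = m * (n:ℤ) := by omega
    rw [harg] at h
    rw [hiter m n g, h, MulAut.mul_apply, hpow]
  rw [hval]
  have hrcast : ((r.toNat : ℕ) : ℤ) = r := Int.toNat_of_nonneg hr0
  have hj : r.toNat ∈ Finset.range m₀.toNat := Finset.mem_range.2 (by omega)
  have himg : αz r ((⇑(αz m₀))^[q.toNat] g) ∈ ⇑(αz ((r.toNat : ℕ) : ℤ)) '' V := by
    rw [hrcast]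
    exact ⟨_, hmem, rfl⟩
  exact Set.mem_biUnion hj himg

end Stmt18Aux

/-- Let `H` be a connected-by-compact locally compact group and `(α_t)` an action of
`Λ ∈ {ℝ, ℤ}` on `H` (coming from a semidirect product `G = H ⋊ Λ`).  If `α_t` is a
compaction for some `t > 0` then it is a compaction for every `t > 0` (both for `Λ = ℝ` and
`Λ = ℤ`).  Moreover, if `H` has no nontrivial compact normal subgroup and splits as
`M ⋊ K` with `K` compact, then composing a compaction of `H` with an inner automorphism of
`H` again yields a compaction. -/
theorem stmt_18 {H : Type*} [Group H] [TopologicalSpace H] [IsTopologicalGroup H]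
    [LocallyCompactSpace H] [T2Space H]
    -- `H` is connected-by-compact
    (hcbc : ∃ K : Set H, IsCompact K ∧ Set.univ ⊆ connectedComponent (1 : H) * K)
    -- a continuous one-parameter group of automorphisms (the `ℝ`-action of `G = H ⋊ ℝ`)
    (α : ℝ → MulAut H) (hα : ∀ s t : ℝ, α (s + t) = α s * α t)
    (hαcont : Continuous fun p : ℝ × H => α p.1 p.2) :
    -- `Λ = ℝ`: if some `α_t`, `t > 0`, is a compaction, then all are
    ((∃ t : ℝ, 0 < t ∧ CompactingFun ⇑(α t)) →
      ∀ t : ℝ, 0 < t → CompactingFun ⇑(α t)) ∧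
    -- `Λ = ℤ`: same statement for actions of `ℤ`
    (∀ αz : ℤ → MulAut H, (∀ m k : ℤ, αz (m + k) = αz m * αz k) →
      (∀ m : ℤ, Continuous ⇑(αz m)) →
      (∃ m : ℤ, 0 < m ∧ CompactingFun ⇑(αz m)) →
      ∀ m : ℤ, 0 < m → CompactingFun ⇑(αz m)) ∧
    -- composing a compaction with an inner automorphism
    ((∀ N : Subgroup H, N.Normal → IsCompact (N : Set H) → N = ⊥) →
      (∃ M K : Subgroup H, M.Normal ∧ IsCompact (K : Set H) ∧ M ⊓ K = ⊥ ∧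
        (M : Set H) * (K : Set H) = Set.univ) →
      ∀ β : MulAut H, Continuous ⇑β → CompactingFun ⇑β →
        ∀ x : H, CompactingFun (⇑β ∘ fun h => x * h * x⁻¹)) := by
  refine ⟨fun hex => Stmt18Aux.compacting_real α hα hαcont hex,
    fun αz h1 h2 hex => Stmt18Aux.compacting_int αz h1 h2 hex,
    fun _ _ β hβ hcf x => ?_⟩
  have hfun : (⇑β ∘ fun h => x * h * x⁻¹) = fun h => β x * β h * (β x)⁻¹ := by
    funext h
    simp [map_mul, map_inv]
  rw [hfun]
  exact Stmt18Aux.compacting_conj β hβ hcf (β x)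
end

section
/- Let α be a compaction of a locally compact group H with limit group L (the intersection of all compact vacuum sets). Then a compact subset K of H is a vacuum set for α if and only if K is a neighbourhood of L. -/
/-- `Ω` is a vacuum set for `α`: every compact set is eventually pushed into `Ω`. -/
def IsVacuumSet {H : Type*} [Group H] [TopologicalSpace H] (α : MulAut H) (Ω : Set H) :
    Prop :=
  ∀ M : Set H, IsCompact M → ∃ N : ℕ, ∀ n : ℕ, N < n → ⇑(α ^ n) '' M ⊆ Ω

section Aux

variable {H : Type*} [Group H] [TopologicalSpace H] (α : MulAut H)

lemma vacuum_mono {Ω Ω' : Set H} (h : IsVacuumSet α Ω) (hs : Ω ⊆ Ω') : IsVacuumSet α Ω' := by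
  intro M hM
  obtain ⟨N, hN⟩ := h M hM
  exact ⟨N, fun n hn => (hN n hn).trans hs⟩

lemma vacuum_inter {Ω Ω' : Set H} (h : IsVacuumSet α Ω) (h' : IsVacuumSet α Ω') :
    IsVacuumSet α (Ω ∩ Ω') := by
  intro M hM
  obtain ⟨N, hN⟩ := h M hM
  obtain ⟨N', hN'⟩ := h' M hM
  refine ⟨max N N', fun n hn => Set.subset_inter ?_ ?_⟩
  · exact hN n (lt_of_le_of_lt (le_max_left _ _) hn)
  · exact hN' n (lt_of_le_of_lt (le_max_right _ _) hn)

lemma vacuum_image {Ω : Set H} (h : IsVacuumSet α Ω) : IsVacuumSet α (⇑α '' Ω) := by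
  intro M hM
  obtain ⟨N, hN⟩ := h M hM
  refine ⟨N + 1, fun n hn => ?_⟩
  obtain ⟨m, rfl⟩ : ∃ m, n = m + 1 := ⟨n - 1, by omega⟩
  have : (α : MulAut H) ^ (m + 1) = α * α ^ m := by rw [pow_succ']
  rw [this, MulAut.coe_mul, Set.image_comp]
  exact Set.image_mono (hN m (by omega))

lemma vacuum_image_symm {Ω : Set H} (h : IsVacuumSet α Ω) : IsVacuumSet α (⇑α.symm '' Ω) := by
  intro M hM
  obtain ⟨N, hN⟩ := h M hM
  refine ⟨N, fun n hn => ?_⟩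
  rintro y ⟨x, hx, rfl⟩
  refine ⟨(α ^ (n + 1)) x, hN (n + 1) (by omega) ⟨x, hx, rfl⟩, ?_⟩
  have : (α : MulAut H) ^ (n + 1) = α * α ^ n := by rw [pow_succ']
  rw [this, MulAut.mul_apply, MulEquiv.symm_apply_apply]

variable (hc : Continuous ⇑α) (hc' : Continuous ⇑α.symm)

include hc hc' in
/-- The images of a compact vacuum set under integer powers of `α` are compact vacuum sets. -/
lemma zpow_image_mem : ∀ i : ℤ, ∀ Ω : Set H, IsCompact Ω → IsVacuumSet α Ω →
    IsCompact (⇑(α ^ i) '' Ω) ∧ IsVacuumSet α (⇑(α ^ i) '' Ω) := by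
  intro i
  induction i using Int.induction_on with
  | zero =>
    intro Ω hcpt hvac
    simpa using ⟨hcpt, hvac⟩
  | succ i IH =>
    intro Ω hcpt hvac
    have h1 : (α : MulAut H) ^ ((i : ℤ) + 1) = α ^ (i : ℤ) * α := zpow_add_one α i
    rw [h1, MulAut.coe_mul, Set.image_comp]
    exact IH (⇑α '' Ω) (hcpt.image hc) (vacuum_image α hvac)
  | pred i IH =>
    intro Ω hcpt hvac
    have h1 : (α : MulAut H) ^ (-(i : ℤ) - 1) = α ^ (-(i : ℤ)) * α⁻¹ := zpow_sub_one α _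
    have h2 : ⇑(α⁻¹ : MulAut H) = ⇑α.symm := rfl
    rw [h1, MulAut.coe_mul, Set.image_comp, h2]
    exact IH (⇑α.symm '' Ω) (hcpt.image hc') (vacuum_image_symm α hvac)

include hc hc' in
lemma continuous_zpow' : ∀ i : ℤ, Continuous ⇑(α ^ i) := by
  intro i
  induction i using Int.induction_on with
  | zero => simpa using continuous_id
  | succ i IH =>
    rw [zpow_add_one, MulAut.coe_mul]
    exact IH.comp hc
  | pred i IH =>
    rw [zpow_sub_one, MulAut.coe_mul]
    exact IH.comp hc'

include hc hc' in
lemma isOpenMap_zpow (i : ℤ) : IsOpenMap ⇑(α ^ i) := by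
  intro U hU
  have hinv : Continuous ⇑(α ^ (-i)) := continuous_zpow' α hc hc' (-i)
  have himg : ⇑(α ^ i) '' U = ⇑(α ^ (-i)) ⁻¹' U := by
    ext y
    constructor
    · rintro ⟨x, hx, rfl⟩
      have : (α ^ (-i)) ((α ^ i) x) = x := by
        rw [← MulAut.mul_apply, zpow_neg, inv_mul_cancel]; rfl
      simpa [Set.mem_preimage, this] using hx
    · intro hy
      refine ⟨(α ^ (-i)) y, hy, ?_⟩
      rw [← MulAut.mul_apply, zpow_neg, mul_inv_cancel]; rfl
  rw [himg]
  exact hU.preimage hinv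

end Aux

/-- Let `α` be a compaction of a locally compact group `H` with limit group `L` (the
intersection of all compact vacuum sets).  A compact subset `K` of `H` is a vacuum set for
`α` if and only if `K` is a neighbourhood of `L`. -/
theorem stmt_19 {H : Type*} [Group H] [TopologicalSpace H] [IsTopologicalGroup H]
    [LocallyCompactSpace H] [T2Space H]
    (α : MulAut H) (hc : Continuous ⇑α) (hc' : Continuous ⇑α.symm)
    (hcpt : ∃ Ω : Set H, IsCompact Ω ∧ IsVacuumSet α Ω)
    (L : Set H) (hL : L = ⋂₀ {Ω : Set H | IsCompact Ω ∧ IsVacuumSet α Ω})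
    (K : Set H) (hK : IsCompact K) :
    IsVacuumSet α K ↔ L ⊆ interior K := by
  classical
  obtain ⟨Ω₀, hΩ₀c, hΩ₀v⟩ := hcpt
  set F : Set (Set H) := {Ω : Set H | IsCompact Ω ∧ IsVacuumSet α Ω} with hF
  -- L is compact
  have hLsub : L ⊆ Ω₀ := hL ▸ Set.sInter_subset_of_mem ⟨hΩ₀c, hΩ₀v⟩
  have hLclosed : IsClosed L := by
    rw [hL]
    exact isClosed_sInter (fun Ω hΩ => hΩ.1.isClosed)
  have hLcpt : IsCompact L := hΩ₀c.of_isClosed_subset hLclosed hLsub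
  -- L is invariant under every integer power of α
  have hLle : ∀ i : ℤ, ⇑(α ^ i) '' L ⊆ L := by
    intro i
    rintro _ ⟨x, hx, rfl⟩
    rw [hL]
    rintro Ω ⟨hΩc, hΩv⟩
    have hmem : x ∈ ⇑(α ^ (-i)) '' Ω := by
      have := zpow_image_mem α hc hc' (-i) Ω hΩc hΩv
      exact (hL ▸ hx) _ this
    obtain ⟨y, hy, rfl⟩ := hmem
    have : (α ^ i) ((α ^ (-i)) y) = y := by
      rw [← MulAut.mul_apply, zpow_neg, mul_inv_cancel]; rfl
    rwa [this]
  have hLinv : ∀ i : ℤ, ⇑(α ^ i) '' L = L := by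
    intro i
    refine Set.Subset.antisymm (hLle i) ?_
    intro x hx
    have hx' : (α ^ (-i)) x ∈ L := hLle (-i) ⟨x, hx, rfl⟩
    refine ⟨(α ^ (-i)) x, hx', ?_⟩
    rw [← MulAut.mul_apply, zpow_neg, mul_inv_cancel]; rfl
  constructor
  · -- If K is a vacuum set then K is a neighbourhood of L.
    intro hKvac
    obtain ⟨V, hVc, hLV⟩ := exists_compact_superset hLcpt
    have hWc : IsCompact (V ∪ Ω₀) := hVc.union hΩ₀c
    have hWv : IsVacuumSet α (V ∪ Ω₀) := vacuum_mono α hΩ₀v Set.subset_union_right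
    obtain ⟨N, hN⟩ := hKvac (V ∪ Ω₀) hWc
    have hsub : ⇑(α ^ (N + 1)) '' (V ∪ Ω₀) ⊆ K := hN (N + 1) (lt_add_one N)
    have hcast : (α : MulAut H) ^ ((N + 1 : ℕ) : ℤ) = α ^ (N + 1) := zpow_natCast α (N + 1)
    calc L = ⇑(α ^ ((N + 1 : ℕ) : ℤ)) '' L := (hLinv _).symm
      _ ⊆ ⇑(α ^ ((N + 1 : ℕ) : ℤ)) '' interior (V ∪ Ω₀) := by
          apply Set.image_mono
          exact hLV.trans (interior_mono Set.subset_union_left)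
      _ ⊆ interior (⇑(α ^ ((N + 1 : ℕ) : ℤ)) '' (V ∪ Ω₀)) :=
          (isOpenMap_zpow α hc hc' _).image_interior_subset _
      _ ⊆ interior K := by
          apply interior_mono
          rw [hcast]
          exact hsub
  · -- If K is a neighbourhood of L then K is a vacuum set.
    intro hLK
    -- the full two-sided intersection of the α-orbit of Ω₀ is contained in L
    have hDL : (⋂ i : ℤ, ⇑(α ^ i) '' Ω₀) ⊆ L := by
      intro x hx
      rw [hL]
      rintro Ω ⟨hΩc, hΩv⟩
      obtain ⟨N, hN⟩ := hΩv Ω₀ hΩ₀c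
      have hx' : x ∈ ⇑(α ^ ((N + 1 : ℕ) : ℤ)) '' Ω₀ := Set.mem_iInter.mp hx _
      rw [zpow_natCast] at hx'
      exact hN (N + 1) (lt_add_one N) hx'
    -- compactness argument: a finite subfamily is already inside interior K
    have hclosedZ : ∀ i : ℤ, IsClosed (⇑(α ^ i) '' Ω₀) := fun i =>
      (zpow_image_mem α hc hc' i Ω₀ hΩ₀c hΩ₀v).1.isClosed
    have hscpt : IsCompact (Ω₀ ∩ (interior K)ᶜ) :=
      hΩ₀c.inter_right (isClosed_compl_iff.mpr isOpen_interior)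
    have hempty : (Ω₀ ∩ (interior K)ᶜ) ∩ ⋂ i : ℤ, ⇑(α ^ i) '' Ω₀ = ∅ := by
      apply Set.eq_empty_of_forall_notMem
      rintro x ⟨⟨-, hxc⟩, hxD⟩
      exact hxc (hLK (hDL hxD))
    obtain ⟨t, ht⟩ := hscpt.elim_finite_subfamily_closed _ hclosedZ hempty
    -- the corresponding finite intersection is a vacuum set inside K
    have hsubK : Ω₀ ∩ ⋂ i ∈ t, ⇑(α ^ i) '' Ω₀ ⊆ K := by
      intro x hx
      by_contra hxK
      have hxint : x ∉ interior K := fun h => hxK (interior_subset h)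
      have : x ∈ (Ω₀ ∩ (interior K)ᶜ) ∩ ⋂ i ∈ t, ⇑(α ^ i) '' Ω₀ :=
        ⟨⟨hx.1, hxint⟩, hx.2⟩
      rw [ht] at this
      exact this
    have hvacfin : ∀ s : Finset ℤ, IsVacuumSet α (Ω₀ ∩ ⋂ i ∈ s, ⇑(α ^ i) '' Ω₀) := by
      intro s
      induction s using Finset.induction_on with
      | empty => simpa using hΩ₀v
      | @insert a s ha IH =>
          rw [Finset.set_biInter_insert, Set.inter_left_comm]
          exact vacuum_inter α (zpow_image_mem α hc hc' a Ω₀ hΩ₀c hΩ₀v).2 IH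
    exact vacuum_mono α (hvacfin t) hsubK
end
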